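/- arXiv:1509.05815 — 2 statements merged into one kernel-verified Lean document; each statement's English description precedes it below -/
import Mathlib

section
/- Let Δ ⊂ ℝⁿ be an n-dimensional lattice polytope with N = |Δ| lattice points I_1, …, I_N. Let x_1, …, x_M ∈ ℝⁿ be points and m_1, …, m_M positive integers with Σ_i m_i = N − 1. Let A be the (N−1) × N tw-matrix with entries A_{ij} = I_j · x_i and row weights m_i, and let a = (a_1, …, a_N) be the vector of maximal tw-minors of A, viewed as a coefficient vector a_{I_j} = a_j of a tropical polynomial with support Δ. Then V(a) has multiplicity at least m_i at x_i for every i. Moreover, every coefficient vector a' with support Δ such that V(a') has multiplicity at least m_i at x_i for every i satisfies a' = a + c·(1, …, 1) for some c ∈ ℝ if and only if every maximal tw-minor of A is tw-nonsingular. -/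
/-- An ordered partition of the column set `Fin K` into blocks of sizes `m i`. -/
def IsTWPartition {M K : ℕ} (m : Fin M → ℕ) (P : Fin M → Finset (Fin K)) : Prop :=
  (∀ i, (P i).card = m i) ∧ ∀ j : Fin K, ∃! i, j ∈ P i

/-- The sum `Σ_i Σ_{j ∈ I_i} A_{ij}` associated to an ordered partition. -/
def partSum {M K : ℕ} (A : Fin M → Fin K → ℝ) (P : Fin M → Finset (Fin K)) : ℝ :=
  ∑ i, ∑ j ∈ P i, A i j

/-- The tw-permanent: the minimum of `partSum` over all ordered partitions. -/
noncomputable def twPerm {M K : ℕ} (m : Fin M → ℕ) (A : Fin M → Fin K → ℝ) : ℝ :=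
  sInf (partSum A '' {P | IsTWPartition m P})

/-- `A` is tw-singular. -/
def TWSingular {M K : ℕ} (m : Fin M → ℕ) (A : Fin M → Fin K → ℝ) : Prop :=
  ∃ P Q : Fin M → Finset (Fin K), IsTWPartition m P ∧ IsTWPartition m Q ∧ P ≠ Q ∧
    partSum A P = partSum A Q ∧ ∀ R, IsTWPartition m R → partSum A P ≤ partSum A R

/-- The tw-matrix obtained by deleting column `j`. -/
def minorMatrix {M K : ℕ} (A : Fin M → Fin (K + 1) → ℝ) (j : Fin (K + 1)) :
    Fin M → Fin K → ℝ :=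
  fun i k => A i (j.succAbove k)

/-- The inclusion of `ℤⁿ` in `ℝⁿ`. -/
def toR {n : ℕ} (I : Fin n → ℤ) : Fin n → ℝ := fun k => (I k : ℝ)

/-- `I · x`. -/
def dotIR {n : ℕ} (I : Fin n → ℤ) (x : Fin n → ℝ) : ℝ := ∑ k, (I k : ℝ) * x k

/-- `V(a)` (with coefficients indexed by the lattice points `I j` of `Δ`) has multiplicity
at least `μ` at `x`: the minimum of `a j + I j · x` is attained by at least `μ + 1`
indices. -/
def MultAtLeast {n K : ℕ} (I : Fin (K + 1) → Fin n → ℤ) (a : Fin (K + 1) → ℝ)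
    (x : Fin n → ℝ) (μ : ℕ) : Prop :=
  μ + 1 ≤ {j : Fin (K + 1) | ∀ k, a j + dotIR (I j) x ≤ a k + dotIR (I k) x}.ncard


section TWAuxSection

open Finset



namespace TWAux

/-- Existence of a partition of a finset into blocks of prescribed sizes. -/
theorem exists_partition {α : Type*} [DecidableEq α] :
    ∀ {M : ℕ} (m : Fin M → ℕ) (s : Finset α), s.card = ∑ i, m i →
      ∃ P : Fin M → Finset α, (∀ i, P i ⊆ s) ∧ (∀ i, (P i).card = m i) ∧
        ∀ c ∈ s, ∃! i, c ∈ P i := by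
  intro M
  induction M with
  | zero =>
    intro m s hs
    refine ⟨fun i => i.elim0, fun i => i.elim0, fun i => i.elim0, fun c hc => ?_⟩
    simp at hs
    simp [hs] at hc
  | succ M ih =>
    intro m s hs
    rw [Fin.sum_univ_succ] at hs
    obtain ⟨t, hts, htcard⟩ := s.exists_subset_card_eq (n := m 0) (by omega)
    obtain ⟨P, hP1, hP2, hP3⟩ := ih (fun i => m i.succ) (s \ t) (by
      rw [card_sdiff_of_subset hts, htcard, hs]; simp)
    refine ⟨Fin.cons t P, ?_, ?_, ?_⟩
    · intro i
      induction i using Fin.cases with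
      | zero => simpa using hts
      | succ i' => simpa using (hP1 i').trans sdiff_subset
    · intro i
      induction i using Fin.cases with
      | zero => simpa using htcard
      | succ i' => simpa using hP2 i'
    · intro c hc
      by_cases hct : c ∈ t
      · refine ⟨0, by simpa using hct, fun i hi => ?_⟩
        induction i using Fin.cases with
        | zero => rfl
        | succ i' =>
          exfalso
          have : c ∈ s \ t := hP1 i' (by simpa using hi)
          exact (mem_sdiff.1 this).2 hct
      · obtain ⟨i', hi', hi'u⟩ := hP3 c (mem_sdiff.2 ⟨hc, hct⟩)
        refine ⟨i'.succ, by simpa using hi', fun i hi => ?_⟩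
        induction i using Fin.cases with
        | zero => exact absurd (by simpa using hi) hct
        | succ i'' => simpa using congrArg Fin.succ (hi'u i'' (by simpa using hi))

/-- Minimal positive period of an eventually periodic point. -/
theorem exists_min_period {α : Type*} [Finite α] (f : α → α) (x₀ : α) :
    ∃ (x : α) (p : ℕ), 0 < p ∧ f^[p] x = x ∧ (∃ n, f^[n] x₀ = x) ∧
      ∀ q, 0 < q → f^[q] x = x → p ≤ q := by
  obtain ⟨n, m, hnm, heq⟩ := Finite.exists_ne_map_eq_of_infinite (fun k : ℕ => f^[k] x₀)
  rcases Nat.lt_or_ge n m with h | h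
  · have key : f^[m - n] (f^[n] x₀) = f^[n] x₀ := by
      rw [← Function.iterate_add_apply]
      rw [Nat.sub_add_cancel h.le]
      exact heq.symm
    have hpos : 0 < m - n := by omega
    have hex : ∃ p, 0 < p ∧ f^[p] (f^[n] x₀) = f^[n] x₀ := ⟨m - n, hpos, key⟩
    classical
    refine ⟨f^[n] x₀, Nat.find hex, (Nat.find_spec hex).1, (Nat.find_spec hex).2,
      ⟨n, rfl⟩, fun q hq1 hq2 => ?_⟩
    by_contra hlt
    exact (Nat.find_min hex (by omega)) ⟨hq1, hq2⟩
  · have hnm' : m < n := by omega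
    have key : f^[n - m] (f^[m] x₀) = f^[m] x₀ := by
      rw [← Function.iterate_add_apply, Nat.sub_add_cancel hnm'.le]
      exact heq
    have hex : ∃ p, 0 < p ∧ f^[p] (f^[m] x₀) = f^[m] x₀ := ⟨n - m, by omega, key⟩
    classical
    refine ⟨f^[m] x₀, Nat.find hex, (Nat.find_spec hex).1, (Nat.find_spec hex).2,
      ⟨m, rfl⟩, fun q hq1 hq2 => ?_⟩
    by_contra hlt
    exact (Nat.find_min hex (by omega)) ⟨hq1, hq2⟩

/-- Distinctness of points on a minimal cycle. -/
theorem cycle_distinct {α : Type*} (f : α → α) (x : α) (p : ℕ)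
    (hp : f^[p] x = x) (hmin : ∀ q, 0 < q → f^[q] x = x → p ≤ q)
    {r s : ℕ} (hr : r < s) (hs : s < p) : f^[r] x ≠ f^[s] x := by
  intro h
  have key : f^[p - s + r] x = x := by
    have : f^[p - s] (f^[s] x) = x := by
      rw [← Function.iterate_add_apply, Nat.sub_add_cancel hs.le, hp]
    calc f^[p - s + r] x = f^[p - s] (f^[r] x) := by rw [Function.iterate_add_apply]
    _ = f^[p - s] (f^[s] x) := by rw [h]
    _ = x := this
  have := hmin (p - s + r) (by omega) key
  omega

end TWAux



namespace TWAux

theorem sum_eq_one_of_le_one {N : ℕ} (v : Fin N → ℕ) (hle : ∀ j, v j ≤ 1)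
    (hsum : ∑ j, v j = N) : ∀ j, v j = 1 := by
  intro j₀
  have h1 : ∑ j ∈ univ.erase j₀, v j ≤ (univ.erase j₀).card • 1 :=
    Finset.sum_le_card_nsmul _ _ 1 (fun x _ => hle x)
  have h2 : ∑ j ∈ univ.erase j₀, v j + v j₀ = N := by
    rw [Finset.sum_erase_add _ _ (mem_univ j₀)]; exact hsum
  have h3 : (univ.erase j₀).card = N - 1 := by
    rw [card_erase_of_mem (mem_univ j₀), card_univ, Fintype.card_fin]
  have hN : 1 ≤ N := Fin.pos j₀
  have := hle j₀
  simp only [smul_eq_mul, mul_one] at h1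
  omega

/-- König-type layer decomposition of a "D-regular" bipartite multigraph with
row capacities. -/
theorem kdecomp {N : ℕ} : ∀ (D : ℕ) {ι : Type*} [Fintype ι] [DecidableEq ι]
    (μ : ι → ℕ) (g : ι → Fin N → ℕ), (∑ i, μ i = N) →
    (∀ i, ∑ j, g i j = D * μ i) → (∀ j, ∑ i, g i j = D) →
    ∃ layers : Fin D → ι → Fin N → ℕ,
      (∀ i j, ∑ c, layers c i j = g i j) ∧ (∀ c i, ∑ j, layers c i j = μ i) ∧
      (∀ c j, ∑ i, layers c i j = 1) ∧ (∀ c i j, layers c i j ≤ 1) := by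
  intro D
  induction D with
  | zero =>
    intro ι _ _ μ g hμ hrow hcol
    refine ⟨fun c => c.elim0, fun i j => ?_, fun c => c.elim0, fun c => c.elim0,
      fun c => c.elim0⟩
    have : g i j = 0 := by
      have h := hcol j
      have := Finset.sum_eq_zero_iff.1 h i (mem_univ i)
      exact this
    simp [this]
  | succ D ih =>
    intro ι _ _ μ g hμ hrow hcol
    classical
    set t : ι → Finset (Fin N) := fun i => univ.filter (fun j => 0 < g i j) with ht
    -- Hall condition on row copies
    have hall : ∀ s : Finset ((i : ι) × Fin (μ i)),
        s.card ≤ (s.biUnion (fun x => t x.1)).card := by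
      intro s
      set I := s.image Sigma.fst with hI
      have hB : s.biUnion (fun x => t x.1) = I.biUnion t := by
        ext j
        simp only [mem_biUnion, hI, mem_image]
        constructor
        · rintro ⟨x, hx, hj⟩; exact ⟨x.1, ⟨x, hx, rfl⟩, hj⟩
        · rintro ⟨i, ⟨x, hx, rfl⟩, hj⟩; exact ⟨x, hx, hj⟩
      have h1 : s.card ≤ ∑ i ∈ I, μ i := by
        have hsub : s ⊆ I.sigma (fun i => (univ : Finset (Fin (μ i)))) := by
          intro x hx
          rw [mem_sigma]
          exact ⟨mem_image_of_mem _ hx, mem_univ _⟩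
        calc s.card ≤ (I.sigma (fun i => (univ : Finset (Fin (μ i))))).card :=
              card_le_card hsub
        _ = ∑ i ∈ I, μ i := by rw [card_sigma]; simp
      have h3 : (D + 1) * (∑ i ∈ I, μ i) ≤ (D + 1) * (I.biUnion t).card := by
        have e1 : ∀ i ∈ I, (D + 1) * μ i = ∑ j ∈ I.biUnion t, g i j := by
          intro i hi
          rw [← hrow i]
          refine (Finset.sum_subset (subset_univ _) ?_).symm
          intro j _ hj
          by_contra hne
          exact hj (mem_biUnion.2 ⟨i, hi, by simp [ht, Nat.pos_of_ne_zero hne]⟩)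
        calc (D + 1) * (∑ i ∈ I, μ i) = ∑ i ∈ I, (D + 1) * μ i := by
              rw [Finset.mul_sum]
        _ = ∑ i ∈ I, ∑ j ∈ I.biUnion t, g i j := Finset.sum_congr rfl e1
        _ = ∑ j ∈ I.biUnion t, ∑ i ∈ I, g i j := Finset.sum_comm
        _ ≤ ∑ j ∈ I.biUnion t, ∑ i, g i j :=
              Finset.sum_le_sum (fun j _ => Finset.sum_le_sum_of_subset (subset_univ I))
        _ = ∑ j ∈ I.biUnion t, (D + 1) := Finset.sum_congr rfl (fun j _ => hcol j)
        _ = (I.biUnion t).card * (D + 1) := by rw [Finset.sum_const, smul_eq_mul]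
        _ = (D + 1) * (I.biUnion t).card := mul_comm _ _
      have h4 : ∑ i ∈ I, μ i ≤ (I.biUnion t).card :=
        Nat.le_of_mul_le_mul_left h3 (Nat.succ_pos D)
      rw [hB]; exact h1.trans h4
    obtain ⟨f, hfinj, hft⟩ :=
      (Finset.all_card_le_biUnion_card_iff_exists_injective (fun x : (i : ι) × Fin (μ i) => t x.1)).1 hall
    set h0 : ι → Fin N → ℕ :=
      fun i j => (univ.filter (fun tc : Fin (μ i) => f ⟨i, tc⟩ = j)).card with hh0
    have hle1 : ∀ i j, h0 i j ≤ 1 := by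
      intro i j
      refine Finset.card_le_one.2 (fun tc h1 tc' h2 => ?_)
      simp only [mem_filter] at h1 h2
      have := hfinj (h1.2.trans h2.2.symm)
      simpa using this
    have hrow0 : ∀ i, ∑ j, h0 i j = μ i := by
      intro i
      rw [hh0]
      have := Finset.card_eq_sum_card_fiberwise
        (f := fun tc : Fin (μ i) => f ⟨i, tc⟩) (s := univ) (t := univ)
        (fun x _ => mem_univ _)
      simpa using this.symm
    have hpos : ∀ i j, 0 < h0 i j → 0 < g i j := by
      intro i j h
      obtain ⟨tc, htc⟩ := Finset.card_pos.1 h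
      simp only [mem_filter] at htc
      have := hft ⟨i, tc⟩
      rw [htc.2] at this
      simpa [ht] using this
    have hle_g : ∀ i j, h0 i j ≤ g i j := by
      intro i j
      rcases Nat.eq_zero_or_pos (h0 i j) with h | h
      · simp [h]
      · exact le_trans (hle1 i j) (hpos i j h)
    have hcol0 : ∀ j, ∑ i, h0 i j = 1 := by
      have hcol_le : ∀ j, ∑ i, h0 i j ≤ 1 := by
        intro j
        have heq : ∑ i, h0 i j = ((univ : Finset ((i : ι) × Fin (μ i))).filter
            (fun x => f x = j)).card := by
          have : (univ : Finset ((i : ι) × Fin (μ i))).filter (fun x => f x = j) =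
              univ.sigma (fun i => univ.filter (fun tc : Fin (μ i) => f ⟨i, tc⟩ = j)) := by
            ext ⟨i, tc⟩
            simp only [mem_filter, mem_sigma, mem_univ, true_and]
          rw [this, card_sigma]
        rw [heq]
        refine Finset.card_le_one.2 (fun x h1 y h2 => ?_)
        simp only [mem_filter] at h1 h2
        exact hfinj (h1.2.trans h2.2.symm)
      have htot : ∑ j, ∑ i, h0 i j = N := by
        rw [Finset.sum_comm]
        calc ∑ i, ∑ j, h0 i j = ∑ i, μ i := Finset.sum_congr rfl (fun i _ => hrow0 i)
        _ = N := hμ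
      exact sum_eq_one_of_le_one _ hcol_le htot
    -- recurse
    obtain ⟨layers', hl1, hl2, hl3, hl4⟩ := ih μ (fun i j => g i j - h0 i j) hμ
      (by
        intro i
        show ∑ j, (g i j - h0 i j) = D * μ i
        have : ∑ j, (g i j - h0 i j) + ∑ j, h0 i j = ∑ j, g i j := by
          rw [← Finset.sum_add_distrib]
          exact Finset.sum_congr rfl (fun j _ => Nat.sub_add_cancel (hle_g i j))
        have h2 := hrow i
        have h3 := hrow0 i
        have h4 : (D + 1) * μ i = D * μ i + μ i := by ring
        omega)
      (by
        intro j
        show ∑ i, (g i j - h0 i j) = D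
        have : ∑ i, (g i j - h0 i j) + ∑ i, h0 i j = ∑ i, g i j := by
          rw [← Finset.sum_add_distrib]
          exact Finset.sum_congr rfl (fun i _ => Nat.sub_add_cancel (hle_g i j))
        have h2 := hcol j
        have h3 := hcol0 j
        omega)
    refine ⟨Fin.cons h0 layers', ?_, ?_, ?_, ?_⟩
    · intro i j
      rw [Fin.sum_univ_succ]
      simp only [Fin.cons_zero, Fin.cons_succ]
      rw [hl1 i j]
      exact Nat.add_sub_cancel' (hle_g i j)
    · intro c i
      induction c using Fin.cases with
      | zero => simpa using hrow0 i
      | succ c' => simpa using hl2 c' i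
    · intro c j
      induction c using Fin.cases with
      | zero => simpa using hcol0 j
      | succ c' => simpa using hl3 c' j
    · intro c i j
      induction c using Fin.cases with
      | zero => simpa using hle1 i j
      | succ c' => simpa using hl4 c' i j

end TWAux



namespace TWAux

open scoped Classical

variable {M K : ℕ}

/-- A partition of all columns except `j` into blocks of sizes `m i`. -/
def NPart (m : Fin M → ℕ) (j : Fin (K + 1)) (R : Fin M → Finset (Fin (K + 1))) : Prop :=
  (∀ i, (R i).card = m i) ∧ (∀ i, j ∉ R i) ∧ ∀ c, c ≠ j → ∃! i, c ∈ R i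

/-- Total cost of a partition. -/
def ncost (A : Fin M → Fin (K + 1) → ℝ) (R : Fin M → Finset (Fin (K + 1))) : ℝ :=
  ∑ i, ∑ c ∈ R i, A i c

theorem NPart.mem_unique {m : Fin M → ℕ} {j : Fin (K + 1)} {R} (h : NPart m j R)
    {c : Fin (K + 1)} {i i' : Fin M} (h1 : c ∈ R i) (h2 : c ∈ R i') : i = i' := by
  have hcj : c ≠ j := fun he => h.2.1 i (he ▸ h1)
  obtain ⟨i₀, _, hu⟩ := h.2.2 c hcj
  rw [hu i h1, hu i' h2]

theorem NPart.ne_hole {m : Fin M → ℕ} {j : Fin (K + 1)} {R} (h : NPart m j R)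
    {c : Fin (K + 1)} {i : Fin M} (h1 : c ∈ R i) : c ≠ j :=
  fun he => h.2.1 i (he ▸ h1)

theorem NPart.biUnion_eq {m : Fin M → ℕ} {j : Fin (K + 1)} {R} (h : NPart m j R) :
    univ.biUnion R = univ.erase j := by
  ext c
  simp only [mem_biUnion, mem_univ, true_and, mem_erase]
  constructor
  · rintro ⟨i, hi⟩
    exact ⟨h.ne_hole hi, trivial⟩
  · rintro ⟨hc, -⟩
    obtain ⟨i, hi, -⟩ := h.2.2 c hc
    exact ⟨i, hi⟩

theorem NPart.sum_comp {m : Fin M → ℕ} {j : Fin (K + 1)} {R} (h : NPart m j R)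
    (φ : Fin (K + 1) → ℝ) : ∑ i, ∑ c ∈ R i, φ c = ∑ c ∈ univ.erase j, φ c := by
  rw [← h.biUnion_eq, Finset.sum_biUnion]
  intro i _ i' _ hne
  simp only [Function.onFun]
  rw [Finset.disjoint_left]
  intro c h1 h2
  exact hne (h.mem_unique h1 h2)

theorem sum_update_blocks {β : Type*} [AddCommGroup β] (R : Fin M → Finset (Fin (K + 1)))
    (i₀ : Fin M) (B : Finset (Fin (K + 1))) (G : Fin M → Finset (Fin (K + 1)) → β) :
    ∑ i, G i (Function.update R i₀ B i) = (∑ i, G i (R i)) - G i₀ (R i₀) + G i₀ B := by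
  rw [← Finset.sum_erase_add _ _ (mem_univ i₀),
    ← Finset.sum_erase_add univ (fun i => G i (R i)) (mem_univ i₀)]
  have h1 : ∑ i ∈ univ.erase i₀, G i (Function.update R i₀ B i) =
      ∑ i ∈ univ.erase i₀, G i (R i) := by
    refine Finset.sum_congr rfl (fun i hi => ?_)
    rw [Function.update_of_ne (mem_erase.1 hi).1]
  rw [h1, Function.update_self]
  abel

/-- Swapping: replace an element `c` of block `i₀` by the hole `j`, making `c`
the new hole. -/
theorem NPart.swap {m : Fin M → ℕ} {j : Fin (K + 1)} {R} (h : NPart m j R)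
    {c : Fin (K + 1)} {i₀ : Fin M} (hc : c ∈ R i₀) (A : Fin M → Fin (K + 1) → ℝ) :
    NPart m c (Function.update R i₀ (insert j ((R i₀).erase c))) ∧
      ncost A (Function.update R i₀ (insert j ((R i₀).erase c))) =
        ncost A R - A i₀ c + A i₀ j := by
  have hcj : c ≠ j := h.ne_hole hc
  have hjR : j ∉ (R i₀).erase c := fun hj => h.2.1 i₀ (mem_of_mem_erase hj)
  have hcard : ∀ i, (Function.update R i₀ (insert j ((R i₀).erase c)) i).card = m i := by
    intro i
    rcases eq_or_ne i i₀ with rfl | hne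
    · rw [Function.update_self, card_insert_of_notMem hjR, card_erase_of_mem hc]
      have h1 := h.1 i
      have h2 : 0 < (R i).card := card_pos.2 ⟨c, hc⟩
      omega
    · rw [Function.update_of_ne hne]; exact h.1 i
  constructor
  · refine ⟨hcard, ?_, ?_⟩
    · intro i
      rcases eq_or_ne i i₀ with rfl | hne
      · rw [Function.update_self, mem_insert]
        rintro (h1 | h1)
        · exact hcj h1
        · exact (notMem_erase c _) h1
      · rw [Function.update_of_ne hne]
        intro h1
        exact hne (h.mem_unique h1 hc)
    · intro v hv
      rcases eq_or_ne v j with rfl | hvj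
      · refine ⟨i₀, by simp only [Function.update_self]; exact mem_insert_self _ _, ?_⟩
        intro i hi
        by_contra hne
        rw [Function.update_of_ne hne] at hi
        exact h.2.1 i hi
      · obtain ⟨i₁, hi₁, hu₁⟩ := h.2.2 v hvj
        refine ⟨i₁, ?_, ?_⟩
        · rcases eq_or_ne i₁ i₀ with rfl | hne
          · simp only [Function.update_self, mem_insert]
            exact Or.inr (mem_erase.2 ⟨hv, hi₁⟩)
          · simp only [Function.update_of_ne hne]; exact hi₁
        · intro i hi
          rcases eq_or_ne i i₀ with rfl | hne
          · simp only [Function.update_self, mem_insert] at hi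
            rcases hi with h1 | h1
            · exact absurd h1 hvj
            · exact hu₁ i (mem_of_mem_erase h1)
          · rw [Function.update_of_ne hne] at hi
            exact hu₁ i hi
  · unfold ncost
    rw [sum_update_blocks R i₀ _ (fun i B => ∑ v ∈ B, A i v)]
    rw [Finset.sum_insert hjR, Finset.sum_erase_eq_sub hc]
    ring

variable (A : Fin M → Fin (K + 1) → ℝ) (a : Fin (K + 1) → ℝ)

/-- The row minimum `S_i = min_j (a_j + A_{ij})`. -/
noncomputable def Sv (i : Fin M) : ℝ :=
  (univ.image (fun j => a j + A i j)).min' (by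
    refine Finset.image_nonempty.2 ⟨0, mem_univ 0⟩)

theorem Sv_le (i : Fin M) (j : Fin (K + 1)) : Sv A a i ≤ a j + A i j :=
  Finset.min'_le _ _ (mem_image_of_mem _ (mem_univ j))

theorem Sv_attained (i : Fin M) : ∃ j, a j + A i j = Sv A a i := by
  have := Finset.min'_mem (univ.image (fun j => a j + A i j)) (by
    refine Finset.image_nonempty.2 ⟨0, mem_univ 0⟩)
  obtain ⟨j, -, hj⟩ := Finset.mem_image.1 this
  exact ⟨j, hj⟩

/-- Tight columns of row `i`. -/
noncomputable def Tset (i : Fin M) : Finset (Fin (K + 1)) :=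
  univ.filter (fun j => a j + A i j = Sv A a i)

theorem mem_Tset {i : Fin M} {j : Fin (K + 1)} :
    j ∈ Tset A a i ↔ a j + A i j = Sv A a i := by
  simp [Tset]

/-- The augmented-partition construction: a full cover of all columns with block `i'`
enlarged by one, with total cost `Sv i'`, and block `i'` consisting of tight columns. -/
theorem aug_ex (hale : ∀ j R, NPart m j R → a j ≤ ncost A R)
    (haex : ∀ j, ∃ R, NPart m j R ∧ ncost A R = a j) (i' : Fin M) :
    ∃ Q : Fin M → Finset (Fin (K + 1)),
      (∀ i, (Q i).card = m i + (if i = i' then 1 else 0)) ∧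
      (∀ c, ∃! i, c ∈ Q i) ∧
      (∑ i, ∑ c ∈ Q i, A i c) = Sv A a i' ∧
      (Q i' ⊆ Tset A a i') := by
  obtain ⟨js, hjs⟩ := Sv_attained A a i'
  obtain ⟨R, hR, hRc⟩ := haex js
  refine ⟨Function.update R i' (insert js (R i')), ?_, ?_, ?_, ?_⟩
  · intro i
    rcases eq_or_ne i i' with rfl | hne
    · rw [Function.update_self, card_insert_of_notMem (hR.2.1 i), hR.1 i, if_pos rfl]
    · rw [Function.update_of_ne hne, hR.1 i, if_neg hne]
      omega
  · intro c
    rcases eq_or_ne c js with rfl | hne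
    · refine ⟨i', by simp only [Function.update_self]; exact mem_insert_self _ _, ?_⟩
      intro i hi
      by_contra hne
      rw [Function.update_of_ne hne] at hi
      exact hR.2.1 i hi
    · obtain ⟨i₁, hi₁, hu₁⟩ := hR.2.2 c hne
      refine ⟨i₁, ?_, ?_⟩
      · rcases eq_or_ne i₁ i' with rfl | hne'
        · simp only [Function.update_self]; exact mem_insert_of_mem hi₁
        · simp only [Function.update_of_ne hne']; exact hi₁
      · intro i hi
        rcases eq_or_ne i i' with rfl | hne'
        · simp only [Function.update_self, mem_insert] at hi
          rcases hi with h1 | h1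
          · exact absurd h1 hne
          · exact hu₁ i h1
        · rw [Function.update_of_ne hne'] at hi
          exact hu₁ i hi
  · rw [sum_update_blocks R i' _ (fun i B => ∑ v ∈ B, A i v)]
    rw [Finset.sum_insert (hR.2.1 i')]
    have h5 : ∑ i, ∑ v ∈ R i, A i v = a js := hRc
    rw [h5]; linarith [hjs]
  · rw [Function.update_self]
    intro c hc
    rw [mem_insert] at hc
    rcases hc with rfl | hc
    · exact (mem_Tset A a).2 hjs
    · -- tightness via swap
      obtain ⟨hswap, hswapc⟩ := hR.swap hc A
      have h1 : a c ≤ ncost A R - A i' c + A i' js := hswapc ▸ hale c _ hswap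
      rw [hRc] at h1
      have h2 : Sv A a i' ≤ a c + A i' c := Sv_le A a i' c
      refine (mem_Tset A a).2 (le_antisymm (by linarith [hjs]) h2)

/-- Row `i` has at least `m i + 1` tight columns. -/
theorem Tcard (hale : ∀ j R, NPart m j R → a j ≤ ncost A R)
    (haex : ∀ j, ∃ R, NPart m j R ∧ ncost A R = a j) (i : Fin M) :
    m i + 1 ≤ (Tset A a i).card := by
  obtain ⟨Q, hQ1, -, -, hQ4⟩ := aug_ex A a hale haex i
  have := card_le_card hQ4
  rw [hQ1 i, if_pos rfl] at this
  exact this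

end TWAux



namespace TWAux

open scoped Classical

theorem sum_one_exists {n : ℕ} (v : Fin n → ℕ) (hsum : ∑ j, v j = 1) :
    ∃ j, v j = 1 ∧ ∀ j', j' ≠ j → v j' = 0 := by
  have hex : ∃ j, v j ≠ 0 := by
    by_contra h
    push_neg at h
    rw [Finset.sum_eq_zero (fun j _ => h j)] at hsum
    omega
  obtain ⟨j, hj⟩ := hex
  have hsplit : ∑ j' ∈ univ.erase j, v j' + v j = 1 := by
    rw [Finset.sum_erase_add _ _ (mem_univ j)]; exact hsum
  have h0 : ∑ j' ∈ univ.erase j, v j' = 0 := by omega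
  refine ⟨j, by omega, fun j' hj' => ?_⟩
  exact Finset.sum_eq_zero_iff.1 h0 j' (mem_erase.2 ⟨hj', mem_univ _⟩)

theorem sum_ind_unique {M : ℕ} {X : Type*} [DecidableEq X] (Q : Fin M → Finset X) (c : X)
    (hc : ∃! i, c ∈ Q i) : ∑ i, (if c ∈ Q i then (1 : ℕ) else 0) = 1 := by
  obtain ⟨i₀, hi₀, hu⟩ := hc
  rw [Finset.sum_eq_single i₀]
  · rw [if_pos hi₀]
  · intro b _ hb
    rw [if_neg (fun hm => hb (hu b hm))]
  · intro h; exact absurd (mem_univ i₀) h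

theorem sum_ind_card {n : ℕ} (s : Finset (Fin n)) :
    ∑ j, (if j ∈ s then (1 : ℕ) else 0) = s.card := by
  rw [← Finset.card_filter]
  congr 1
  ext j
  simp

variable {M K : ℕ} {m : Fin M → ℕ} (A : Fin M → Fin (K + 1) → ℝ) (a : Fin (K + 1) → ℝ)

/-- The fundamental identity `∑ a_j = ∑ m_i S_i` ("δ = 0"). -/
theorem sum_a_eq (hw : ∑ i, m i = K)
    (hale : ∀ j R, NPart m j R → a j ≤ ncost A R)
    (haex : ∀ j, ∃ R, NPart m j R ∧ ncost A R = a j) :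
    ∑ c, a c = ∑ i, (m i : ℝ) * Sv A a i := by
  have hge : ∑ i, (m i : ℝ) * Sv A a i ≤ ∑ c, a c := by
    obtain ⟨R, hR, hRc⟩ := haex 0
    have h1 : ∑ i, ∑ c ∈ R i, (Sv A a i - a c) ≤ ncost A R := by
      refine Finset.sum_le_sum (fun i _ => Finset.sum_le_sum (fun c _ => ?_))
      have := Sv_le A a i c
      linarith
    have h2 : ∑ i, ∑ c ∈ R i, (Sv A a i - a c) =
        ∑ i, (m i : ℝ) * Sv A a i - ∑ c ∈ univ.erase 0, a c := by
      have e1 : ∀ i, ∑ c ∈ R i, (Sv A a i - a c) =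
          (m i : ℝ) * Sv A a i - ∑ c ∈ R i, a c := by
        intro i
        rw [Finset.sum_sub_distrib, Finset.sum_const, hR.1 i, nsmul_eq_mul]
      rw [Finset.sum_congr rfl (fun i _ => e1 i), Finset.sum_sub_distrib,
        hR.sum_comp a]
    have h3 : ∑ c ∈ univ.erase 0, a c = (∑ c, a c) - a 0 :=
      Finset.sum_erase_eq_sub (mem_univ 0)
    rw [hRc] at h1
    rw [h2, h3] at h1
    linarith
  -- the reverse inequality via the layer decomposition
  have haug := fun i' => aug_ex A a hale haex i'
  choose Qf hQ1 hQ2 hQ3 _ using haug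
  set μ : Fin (M + 1) → ℕ := Fin.cons 1 m with hμdef
  set g : Fin (M + 1) → Fin (K + 1) → ℕ :=
    Fin.cons (fun _ => 1) (fun i j => ∑ i', m i' * (if j ∈ Qf i' i then 1 else 0)) with hgdef
  have hμ : ∑ i, μ i = K + 1 := by
    rw [hμdef, Fin.sum_univ_succ]
    simp [hw]
    omega
  have hrow : ∀ i, ∑ j, g i j = (K + 1) * μ i := by
    intro i
    induction i using Fin.cases with
    | zero => simp [hgdef, hμdef]
    | succ i₀ =>
      simp only [hgdef, hμdef, Fin.cons_succ]
      rw [Finset.sum_comm]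
      have e1 : ∀ i', ∑ j, m i' * (if j ∈ Qf i' i₀ then (1:ℕ) else 0) =
          m i' * (Qf i' i₀).card := by
        intro i'
        rw [← Finset.mul_sum, sum_ind_card]
      rw [Finset.sum_congr rfl (fun i' _ => e1 i')]
      have e2 : ∀ i', m i' * (Qf i' i₀).card =
          m i' * m i₀ + (if i₀ = i' then m i' else 0) := by
        intro i'
        rw [hQ1 i' i₀]
        rcases eq_or_ne i₀ i' with rfl | hne
        · simp [Nat.mul_add]
        · simp [hne, hne.symm]
      rw [Finset.sum_congr rfl (fun i' _ => e2 i'), Finset.sum_add_distrib,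
        ← Finset.sum_mul, hw, Finset.sum_ite_eq]
      simp [Nat.succ_mul, Nat.add_mul]
  have hcol : ∀ j, ∑ i, g i j = K + 1 := by
    intro j
    rw [Fin.sum_univ_succ]
    simp only [hgdef, Fin.cons_zero, Fin.cons_succ]
    rw [Finset.sum_comm]
    have e1 : ∀ i', ∑ i₀, m i' * (if j ∈ Qf i' i₀ then (1:ℕ) else 0) = m i' := by
      intro i'
      rw [← Finset.mul_sum, sum_ind_unique (Qf i') j (hQ2 i' j), Nat.mul_one]
    rw [Finset.sum_congr rfl (fun i' _ => e1 i'), hw]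
    omega
  obtain ⟨layers, hl1, hl2, hl3, hl4⟩ := kdecomp (K + 1) μ g hμ hrow hcol
  -- dummy columns
  have hdum : ∀ c, ∃ jc, layers c 0 jc = 1 ∧ ∀ j', j' ≠ jc → layers c 0 j' = 0 := by
    intro c
    refine sum_one_exists _ ?_
    rw [hl2 c 0]
    simp [hμdef]
  choose jc hjc1 hjc2 using hdum
  set Rc : Fin (K + 1) → Fin M → Finset (Fin (K + 1)) :=
    fun c i => univ.filter (fun v => layers c i.succ v = 1) with hRcdef
  have hcardR : ∀ c i, (Rc c i).card = m i := by
    intro c i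
    rw [hRcdef]
    rw [Finset.card_filter]
    have : ∀ v, (if layers c i.succ v = 1 then (1:ℕ) else 0) = layers c i.succ v := by
      intro v
      have h4 := hl4 c i.succ v
      by_cases h : layers c i.succ v = 1
      · simp [h]
      · have h0 : layers c i.succ v = 0 := by omega
        simp [h, h0]
    rw [Finset.sum_congr rfl (fun v _ => this v), hl2 c i.succ]
    simp [hμdef]
  have hNP : ∀ c, NPart m (jc c) (Rc c) := by
    intro c
    refine ⟨hcardR c, ?_, ?_⟩
    · intro i
      simp only [hRcdef, mem_filter, mem_univ, true_and]
      have hcolsum := hl3 c (jc c)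
      rw [Fin.sum_univ_succ] at hcolsum
      rw [hjc1 c] at hcolsum
      have h5 : ∑ i : Fin M, layers c i.succ (jc c) = 0 := by omega
      have := Finset.sum_eq_zero_iff.1 h5 i (mem_univ i)
      omega
    · intro v hv
      have hcolsum := hl3 c v
      rw [Fin.sum_univ_succ, hjc2 c v hv] at hcolsum
      have hsum1 : ∑ i : Fin M, layers c i.succ v = 1 := by omega
      obtain ⟨i₀, hi₀, hu⟩ := sum_one_exists (fun i => layers c i.succ v) hsum1
      have hi₀' : layers c i₀.succ v = 1 := hi₀
      refine ⟨i₀, by simp only [hRcdef, mem_filter, mem_univ, true_and]; exact hi₀', ?_⟩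
      intro i hi
      simp only [hRcdef, mem_filter, mem_univ, true_and] at hi
      by_contra hne
      have h0 : layers c i.succ v = 0 := hu i hne
      omega
  -- cost identities
  have key2 : ∑ c, a (jc c) = ∑ v, a v := by
    have e1 : ∀ c, a (jc c) = ∑ v, (layers c 0 v : ℝ) * a v := by
      intro c
      rw [Finset.sum_eq_single (jc c)]
      · rw [hjc1 c]; simp
      · intro v _ hv; rw [hjc2 c v hv]; simp
      · intro h; exact absurd (mem_univ _) h
    rw [Finset.sum_congr rfl (fun c _ => e1 c), Finset.sum_comm]
    refine Finset.sum_congr rfl (fun v _ => ?_)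
    rw [← Finset.sum_mul]
    have : ∑ c, (layers c 0 v : ℝ) = ((∑ c, layers c 0 v : ℕ) : ℝ) := by push_cast; rfl
    rw [this, hl1 0 v]
    simp [hgdef]
  have key3 : ∑ c, ncost A (Rc c) = ∑ i', (m i' : ℝ) * Sv A a i' := by
    have e1 : ∀ c, ncost A (Rc c) = ∑ i, ∑ v, (layers c i.succ v : ℝ) * A i v := by
      intro c
      unfold ncost
      refine Finset.sum_congr rfl (fun i _ => ?_)
      rw [hRcdef]
      rw [Finset.sum_filter]
      refine Finset.sum_congr rfl (fun v _ => ?_)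
      have := hl4 c i.succ v
      interval_cases h : layers c i.succ v <;> simp [h]
    rw [Finset.sum_congr rfl (fun c _ => e1 c), Finset.sum_comm]
    have e2 : ∀ i, ∑ c, ∑ v, (layers c i.succ v : ℝ) * A i v =
        ∑ v, (g i.succ v : ℝ) * A i v := by
      intro i
      rw [Finset.sum_comm]
      refine Finset.sum_congr rfl (fun v _ => ?_)
      rw [← Finset.sum_mul]
      have : ∑ c, (layers c i.succ v : ℝ) = ((∑ c, layers c i.succ v : ℕ) : ℝ) := by
        push_cast; rfl
      rw [this, hl1 i.succ v]
    rw [Finset.sum_congr rfl (fun i _ => e2 i)]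
    have e3 : ∀ i v, (g i.succ v : ℝ) = ∑ i', (m i' : ℝ) * (if v ∈ Qf i' i then (1:ℝ) else 0) := by
      intro i v
      simp only [hgdef, Fin.cons_succ]
      push_cast
      refine Finset.sum_congr rfl (fun i' _ => ?_)
      split_ifs <;> simp
    calc ∑ i, ∑ v, (g i.succ v : ℝ) * A i v
        = ∑ i, ∑ v, ∑ i', (m i' : ℝ) * (if v ∈ Qf i' i then (1:ℝ) else 0) * A i v := by
          refine Finset.sum_congr rfl (fun i _ => Finset.sum_congr rfl (fun v _ => ?_))
          rw [e3 i v, Finset.sum_mul]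
    _ = ∑ i', ∑ i, ∑ v, (m i' : ℝ) * (if v ∈ Qf i' i then (1:ℝ) else 0) * A i v := by
          rw [Finset.sum_congr rfl (fun i (_ : i ∈ univ) => Finset.sum_comm
            (s := (univ : Finset (Fin (K+1)))) (t := (univ : Finset (Fin M)))
            (f := fun v i' => (m i' : ℝ) * (if v ∈ Qf i' i then (1:ℝ) else 0) * A i v))]
          exact Finset.sum_comm
    _ = ∑ i', (m i' : ℝ) * ∑ i, ∑ v ∈ Qf i' i, A i v := by
          refine Finset.sum_congr rfl (fun i' _ => ?_)
          rw [Finset.mul_sum]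
          refine Finset.sum_congr rfl (fun i _ => ?_)
          rw [Finset.mul_sum]
          have e4 : ∀ v, (m i' : ℝ) * (if v ∈ Qf i' i then (1:ℝ) else 0) * A i v =
              if v ∈ Qf i' i then (m i' : ℝ) * A i v else 0 := by
            intro v
            split_ifs <;> ring
          rw [Finset.sum_congr rfl (fun v _ => e4 v), Finset.sum_ite_mem,
            Finset.univ_inter]
    _ = ∑ i', (m i' : ℝ) * Sv A a i' := by
          refine Finset.sum_congr rfl (fun i' _ => ?_)
          rw [hQ3 i']
  have key1 : ∑ c, a (jc c) ≤ ∑ c, ncost A (Rc c) :=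
    Finset.sum_le_sum (fun c _ => hale (jc c) (Rc c) (hNP c))
  rw [key2, key3] at key1
  exact le_antisymm key1 hge

end TWAux



namespace TWAux

open scoped Classical

variable {M K : ℕ} {m : Fin M → ℕ} (A : Fin M → Fin (K + 1) → ℝ) (a : Fin (K + 1) → ℝ)

/-- A minimal partition is exactly a tight partition. -/
theorem tight_iff_min (hw : ∑ i, m i = K)
    (hale : ∀ j R, NPart m j R → a j ≤ ncost A R)
    (haex : ∀ j, ∃ R, NPart m j R ∧ ncost A R = a j)
    {j : Fin (K + 1)} {R : Fin M → Finset (Fin (K + 1))} (hR : NPart m j R) :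
    ncost A R = a j ↔ ∀ i, ∀ c ∈ R i, c ∈ Tset A a i := by
  have hdelta := sum_a_eq A a hw hale haex
  have herase : ∑ c ∈ univ.erase j, a c = (∑ c, a c) - a j :=
    Finset.sum_erase_eq_sub (mem_univ j)
  have hbound : ∑ i, ∑ c ∈ R i, (Sv A a i - a c) = a j := by
    have e1 : ∀ i, ∑ c ∈ R i, (Sv A a i - a c) =
        (m i : ℝ) * Sv A a i - ∑ c ∈ R i, a c := by
      intro i
      rw [Finset.sum_sub_distrib, Finset.sum_const, hR.1 i, nsmul_eq_mul]
    rw [Finset.sum_congr rfl (fun i _ => e1 i), Finset.sum_sub_distrib, hR.sum_comp a,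
      herase, ← hdelta]
    ring
  constructor
  · intro hmin i c hc
    -- slack argument
    have hslack : ∑ i, ∑ c ∈ R i, (A i c - (Sv A a i - a c)) = 0 := by
      have : ∑ i, ∑ c ∈ R i, (A i c - (Sv A a i - a c)) =
          ncost A R - ∑ i, ∑ c ∈ R i, (Sv A a i - a c) := by
        unfold ncost
        rw [← Finset.sum_sub_distrib]
        refine Finset.sum_congr rfl (fun i _ => ?_)
        rw [← Finset.sum_sub_distrib]
      rw [this, hbound, hmin]; ring
    have hnn : ∀ i' ∈ (univ : Finset (Fin M)), 0 ≤ ∑ c ∈ R i', (A i' c - (Sv A a i' - a c)) := by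
      intro i' _
      refine Finset.sum_nonneg (fun c _ => ?_)
      have := Sv_le A a i' c
      linarith
    have hz1 := (Finset.sum_eq_zero_iff_of_nonneg hnn).1 hslack i (mem_univ i)
    have hnn2 : ∀ c' ∈ R i, 0 ≤ A i c' - (Sv A a i - a c') := by
      intro c' _
      have := Sv_le A a i c'
      linarith
    have hz2 := (Finset.sum_eq_zero_iff_of_nonneg hnn2).1 hz1 c hc
    exact (mem_Tset A a).2 (by linarith)
  · intro ht
    unfold ncost
    rw [← hbound]
    refine Finset.sum_congr rfl (fun i _ => Finset.sum_congr rfl (fun c hc => ?_))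
    have := (mem_Tset A a).1 (ht i c hc)
    linarith

/-- A "valid set" `S`: the combinatorial witness for non-uniqueness. -/
def ValidS (m : Fin M → ℕ) (S : Finset (Fin (K + 1))) : Prop :=
  S.Nonempty ∧ S ≠ univ ∧ ∀ i, Tset A a i ⊆ S ∨ m i + 1 ≤ ((Tset A a i) \ S).card

/-- If there is no valid set, tight partitions are unique (chain-forcing argument). -/
theorem unique_of_no_valid (hm : ∀ i, 1 ≤ m i) (hw : ∑ i, m i = K)
    (hnv : ∀ S, ¬ ValidS A a m S) {j : Fin (K + 1)}
    {R R' : Fin M → Finset (Fin (K + 1))}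
    (hR : NPart m j R) (hRt : ∀ i, ∀ c ∈ R i, c ∈ Tset A a i)
    (hR' : NPart m j R') (hRt' : ∀ i, ∀ c ∈ R' i, c ∈ Tset A a i) : R = R' := by
  have main : ∀ (fuel : ℕ) (S : Finset (Fin (K + 1))) (Dset : Finset (Fin M)),
      (univ \ S).card ≤ fuel → j ∈ S →
      (∀ i ∈ Dset, Tset A a i ⊆ S) →
      (∀ T, NPart m j T → (∀ i, ∀ c ∈ T i, c ∈ Tset A a i) →
        (∀ i ∈ Dset, T i ⊆ S) ∧ (∀ i ∉ Dset, ∀ c ∈ T i, c ∉ S) ∧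
        (∀ i ∈ Dset, T i = R i)) →
      (∑ i ∈ Dset, m i = S.card - 1) →
      R = R' := by
    intro fuel
    induction fuel with
    | zero =>
      intro S Dset hfuel hjS hDT hforce hcard
      -- S = univ
      have hSuniv : S = univ := by
        have : (univ \ S) = ∅ := Finset.card_eq_zero.1 (Nat.le_zero.1 hfuel)
        have hsub : univ ⊆ S := by
          intro v hv
          by_contra hvS
          have : v ∈ univ \ S := mem_sdiff.2 ⟨hv, hvS⟩
          rw [‹univ \ S = ∅›] at this
          exact absurd this (notMem_empty v)
        exact (Finset.eq_univ_iff_forall.2 (fun v => hsub (mem_univ v)))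
      -- Dset = univ
      have hDuniv : Dset = univ := by
        by_contra hne
        obtain ⟨i₁, -, hi₁⟩ := Finset.exists_of_ssubset
          (lt_of_le_of_ne (subset_univ Dset) hne)
        have hsplit : ∑ i ∈ univ \ Dset, m i + ∑ i ∈ Dset, m i = ∑ i, m i :=
          Finset.sum_sdiff (subset_univ Dset)
        have h1 : 1 ≤ ∑ i ∈ univ \ Dset, m i := by
          calc 1 ≤ m i₁ := hm i₁
          _ ≤ ∑ i ∈ univ \ Dset, m i :=
            Finset.single_le_sum (fun i _ => Nat.zero_le _)
              (mem_sdiff.2 ⟨mem_univ _, hi₁⟩)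
        rw [hw, hcard, hSuniv, card_univ, Fintype.card_fin] at hsplit
        omega
      funext i
      have h1 := (hforce R hR hRt).2.2 i (hDuniv ▸ mem_univ i)
      have h2 := (hforce R' hR' hRt').2.2 i (hDuniv ▸ mem_univ i)
      rw [h1, h2]
    | succ fuel ih =>
      intro S Dset hfuel hjS hDT hforce hcard
      by_cases hSuniv : S = univ
      · -- same final argument: card (univ \ S) = 0 ≤ 0, reuse zero case via ih? do directly
        have hf0 : (univ \ S).card ≤ 0 := by
          rw [hSuniv, Finset.sdiff_self, Finset.card_empty]
        -- inline the zero case by calling the induction with fuel = 0 is not possible;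
        -- redo: use the same proof as in zero case
        have hDuniv : Dset = univ := by
          by_contra hne
          obtain ⟨i₁, -, hi₁⟩ := Finset.exists_of_ssubset
            (lt_of_le_of_ne (subset_univ Dset) hne)
          have hsplit : ∑ i ∈ univ \ Dset, m i + ∑ i ∈ Dset, m i = ∑ i, m i :=
            Finset.sum_sdiff (subset_univ Dset)
          have h1 : 1 ≤ ∑ i ∈ univ \ Dset, m i := by
            calc 1 ≤ m i₁ := hm i₁
            _ ≤ ∑ i ∈ univ \ Dset, m i :=
              Finset.single_le_sum (fun i _ => Nat.zero_le _)
                (mem_sdiff.2 ⟨mem_univ _, hi₁⟩)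
          rw [hw, hcard, hSuniv, card_univ, Fintype.card_fin] at hsplit
          omega
        funext i
        have h1 := (hforce R hR hRt).2.2 i (hDuniv ▸ mem_univ i)
        have h2 := (hforce R' hR' hRt').2.2 i (hDuniv ▸ mem_univ i)
        rw [h1, h2]
      · -- extension step
        have hnotall : ¬ ∀ i, Tset A a i ⊆ S ∨ m i + 1 ≤ ((Tset A a i) \ S).card :=
          fun hall => hnv S ⟨⟨j, hjS⟩, hSuniv, hall⟩
        push_neg at hnotall
        obtain ⟨istar, h1, h2⟩ := hnotall
        have histar : istar ∉ Dset := fun hmem => h1 (hDT istar hmem)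
        have hforced : ∀ T, NPart m j T → (∀ i, ∀ c ∈ T i, c ∈ Tset A a i) →
            T istar = Tset A a istar \ S := by
          intro T hT hTt
          have hsub : T istar ⊆ Tset A a istar \ S := by
            intro c hc
            exact mem_sdiff.2 ⟨hTt istar c hc, (hforce T hT hTt).2.1 istar histar c hc⟩
          refine Finset.eq_of_subset_of_card_le hsub ?_
          rw [hT.1 istar]
          omega
        set S' := S ∪ Tset A a istar with hS'def
        set Dset' := insert istar Dset with hD'def
        -- witness of strict growth
        obtain ⟨cw, hcwT, hcwS⟩ := Finset.not_subset.1 h1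
        have hSS' : S ⊆ S' := Finset.subset_union_left
        have hcw' : cw ∈ S' := Finset.mem_union_right _ hcwT
        have hfuel' : (univ \ S').card ≤ fuel := by
          have hss : univ \ S' ⊂ univ \ S := by
            refine Finset.ssubset_iff_of_subset (Finset.sdiff_subset_sdiff
              (le_refl univ) hSS') |>.2 ?_
            exact ⟨cw, mem_sdiff.2 ⟨mem_univ _, hcwS⟩, fun hmem => (mem_sdiff.1 hmem).2 hcw'⟩
          have := Finset.card_lt_card hss
          omega
        have hcardTS : (Tset A a istar \ S).card = m istar := by
          have := hforced R hR hRt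
          rw [← this, hR.1 istar]
        have hcardS' : S'.card = S.card + m istar := by
          rw [hS'def, ← Finset.union_sdiff_self_eq_union,
            Finset.card_union_of_disjoint Finset.disjoint_sdiff, hcardTS]
        refine ih S' Dset' hfuel' (hSS' hjS) ?_ ?_ ?_
        · intro i hi
          rw [hD'def, mem_insert] at hi
          rcases hi with rfl | hi
          · intro c hc
            exact Finset.mem_union_right _ hc
          · exact (hDT i hi).trans hSS'
        · intro T hT hTt
          obtain ⟨hf1, hf2, hf3⟩ := hforce T hT hTt
          refine ⟨?_, ?_, ?_⟩
          · intro i hi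
            rw [hD'def, mem_insert] at hi
            rcases hi with rfl | hi
            · rw [hforced T hT hTt]
              exact Finset.sdiff_subset.trans (Finset.subset_union_right)
            · exact (hf1 i hi).trans hSS'
          · intro i hi c hc
            rw [hD'def, mem_insert] at hi
            push_neg at hi
            have hiD : i ∉ Dset := hi.2
            have hine : i ≠ istar := hi.1
            intro hcS'
            rw [hS'def, Finset.mem_union] at hcS'
            rcases hcS' with h | h
            · exact hf2 i hiD c hc h
            · -- c ∈ Tset istar; c ∉ S (by hf2); so c ∈ T istar (forced), contradicting uniqueness
              have hcnotS : c ∉ S := hf2 i hiD c hc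
              have : c ∈ T istar := by
                rw [hforced T hT hTt]
                exact mem_sdiff.2 ⟨h, hcnotS⟩
              exact hine (hT.mem_unique hc this)
          · intro i hi
            rw [hD'def, mem_insert] at hi
            rcases hi with rfl | hi
            · rw [hforced T hT hTt, hforced R hR hRt]
            · exact hf3 i hi
        · rw [hD'def, Finset.sum_insert histar, hcard, hcardS']
          have : 1 ≤ S.card := Finset.card_pos.2 ⟨j, hjS⟩
          omega
  refine main (univ \ {j}).card {j} ∅ (le_refl _) (mem_singleton_self j) ?_ ?_ ?_
  · intro i hi; exact absurd hi (notMem_empty i)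
  · intro T hT hTt
    refine ⟨fun i hi => absurd hi (notMem_empty i), ?_, fun i hi => absurd hi (notMem_empty i)⟩
    intro i _ c hc
    rw [mem_singleton]
    exact hT.ne_hole hc
  · simp

end TWAux



namespace TWAux

open scoped Classical

variable {M K : ℕ} {m : Fin M → ℕ} (A : Fin M → Fin (K + 1) → ℝ) (a : Fin (K + 1) → ℝ)

/-- From a valid set one constructs two distinct tight partitions of the same
complement (rotation along a cycle in the exchange graph). -/
theorem two_tight_of_valid (hm : ∀ i, 1 ≤ m i) (hw : ∑ i, m i = K)
    (hale : ∀ j R, NPart m j R → a j ≤ ncost A R)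
    (haex : ∀ j, ∃ R, NPart m j R ∧ ncost A R = a j)
    {S : Finset (Fin (K + 1))} (hS : ValidS A a m S) :
    ∃ (j : Fin (K + 1)) (R R' : Fin M → Finset (Fin (K + 1))),
      NPart m j R ∧ (∀ i, ∀ c ∈ R i, c ∈ Tset A a i) ∧
      NPart m j R' ∧ (∀ i, ∀ c ∈ R' i, c ∈ Tset A a i) ∧ R ≠ R' := by
  obtain ⟨⟨j₁, hj₁⟩, hSne, hSval⟩ := hS
  obtain ⟨R, hR, hRc⟩ := haex j₁
  have hRt : ∀ i, ∀ c ∈ R i, c ∈ Tset A a i :=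
    (tight_iff_min A a hw hale haex hR).1 hRc
  -- choice of a free tight non-S column and its owner, for every R2 row
  have hchoice : ∀ i, ∃ pz : Fin (K + 1) × Fin M,
      ¬ Tset A a i ⊆ S →
        (pz.1 ∈ Tset A a i ∧ pz.1 ∉ S ∧ pz.1 ∉ R i ∧ pz.1 ∈ R pz.2) := by
    intro i
    by_cases h : Tset A a i ⊆ S
    · exact ⟨(j₁, i), fun hc => absurd h hc⟩
    · have hcardT : m i + 1 ≤ ((Tset A a i) \ S).card := by
        rcases hSval i with h' | h'
        · exact absurd h' h
        · exact h'
      have hnot : ¬ ((Tset A a i \ S) ⊆ R i) := by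
        intro hsub
        have := card_le_card hsub
        rw [hR.1 i] at this
        omega
      obtain ⟨z, hz1, hz2⟩ := Finset.not_subset.1 hnot
      have hzS : z ∉ S := (mem_sdiff.1 hz1).2
      have hzj₁ : z ≠ j₁ := fun he => hzS (he ▸ hj₁)
      obtain ⟨e, he, -⟩ := hR.2.2 z hzj₁
      exact ⟨(z, e), fun _ => ⟨(mem_sdiff.1 hz1).1, hzS, hz2, he⟩⟩
  choose pz hpz using hchoice
  set z : Fin M → Fin (K + 1) := fun i => (pz i).1 with hzdef
  set f : Fin M → Fin M := fun i => (pz i).2 with hfdef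
  -- basic facts on R2 rows
  have hzT : ∀ i, ¬ Tset A a i ⊆ S → z i ∈ Tset A a i := fun i h => (hpz i h).1
  have hzS : ∀ i, ¬ Tset A a i ⊆ S → z i ∉ S := fun i h => (hpz i h).2.1
  have hzR : ∀ i, ¬ Tset A a i ⊆ S → z i ∉ R i := fun i h => (hpz i h).2.2.1
  have hzO : ∀ i, ¬ Tset A a i ⊆ S → z i ∈ R (f i) := fun i h => (hpz i h).2.2.2
  have hfR2 : ∀ i, ¬ Tset A a i ⊆ S → ¬ Tset A a (f i) ⊆ S := by
    intro i h hsub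
    exact hzS i h (hsub (hRt (f i) (z i) (hzO i h)))
  have hfne : ∀ i, ¬ Tset A a i ⊆ S → f i ≠ i := by
    intro i h he
    have h2 := hzO i h
    rw [he] at h2
    exact hzR i h h2
  -- R2 is nonempty
  have hR2ne : ∃ i₀, ¬ Tset A a i₀ ⊆ S := by
    by_contra hall
    push_neg at hall
    obtain ⟨j₂, hj₂⟩ : ∃ j₂, j₂ ∉ S := by
      by_contra hc
      push_neg at hc
      exact hSne (Finset.eq_univ_iff_forall.2 hc)
    have hne : j₂ ≠ j₁ := fun he => hj₂ (he ▸ hj₁)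
    obtain ⟨e, he, -⟩ := hR.2.2 j₂ hne
    exact hj₂ (hall e (hRt e j₂ he))
  obtain ⟨i₀, hi₀⟩ := hR2ne
  have hstay : ∀ n, ¬ Tset A a (f^[n] i₀) ⊆ S := by
    intro n
    induction n with
    | zero => exact hi₀
    | succ n ihn =>
      rw [Function.iterate_succ_apply']
      exact hfR2 _ ihn
  obtain ⟨x, p, hp0, hpp, ⟨n₀, hxorb⟩, hpmin⟩ := exists_min_period f i₀
  have hxiter : ∀ r, f^[r] x = f^[r + n₀] i₀ := by
    intro r
    rw [← hxorb, ← Function.iterate_add_apply]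
  have hxR2 : ∀ r, ¬ Tset A a (f^[r] x) ⊆ S := by
    intro r
    rw [hxiter r]
    exact hstay _
  set C : Finset (Fin M) := (range p).image (fun r => f^[r] x) with hCdef
  have hxC : x ∈ C := by
    rw [hCdef, Finset.mem_image]
    exact ⟨0, Finset.mem_range.2 hp0, rfl⟩
  have hmemC : ∀ i ∈ C, ¬ Tset A a i ⊆ S := by
    intro i hi
    rw [hCdef, Finset.mem_image] at hi
    obtain ⟨r, -, rfl⟩ := hi
    exact hxR2 r
  have hfC : ∀ i ∈ C, f i ∈ C := by
    intro i hi
    rw [hCdef, Finset.mem_image] at hi ⊢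
    obtain ⟨r, hr, rfl⟩ := hi
    rw [Finset.mem_range] at hr
    rcases eq_or_lt_of_le (Nat.succ_le_of_lt hr) with he | hlt
    · refine ⟨0, Finset.mem_range.2 hp0, ?_⟩
      rw [← Function.iterate_succ_apply' f r x, he, hpp]
      simp
    · exact ⟨r + 1, Finset.mem_range.2 hlt, Function.iterate_succ_apply' f r x⟩
  have hidx : ∀ r s, r < p → s < p → f^[r] x = f^[s] x → r = s := by
    intro r s hr hs he
    rcases lt_trichotomy r s with h | h | h
    · exact absurd he (cycle_distinct f x p hpp hpmin h hs)
    · exact h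
    · exact absurd he.symm (cycle_distinct f x p hpp hpmin h hr)
  have hfinjC : ∀ c ∈ C, ∀ c' ∈ C, f c = f c' → c = c' := by
    intro c hc c' hc' he
    rw [hCdef, Finset.mem_image] at hc hc'
    obtain ⟨r, hr, rfl⟩ := hc
    obtain ⟨s, hs, rfl⟩ := hc'
    rw [Finset.mem_range] at hr hs
    rw [← Function.iterate_succ_apply' f r x, ← Function.iterate_succ_apply' f s x] at he
    -- normalize indices modulo p
    have hnorm : ∀ t, t < p → f^[t + 1] x = f^[if t + 1 = p then 0 else t + 1] x := by
      intro t ht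
      split_ifs with h
      · rw [h, hpp, Function.iterate_zero_apply]
      · rfl
    rw [hnorm r hr, hnorm s hs] at he
    have h1 : (if r + 1 = p then 0 else r + 1) < p := by split_ifs <;> omega
    have h2 : (if s + 1 = p then 0 else s + 1) < p := by split_ifs <;> omega
    have := hidx _ _ h1 h2 he
    have hrs : r = s := by
      by_cases e1 : r + 1 = p <;> by_cases e2 : s + 1 = p <;> simp [e1, e2] at this <;> omega
    rw [hrs]
  have hzO' : ∀ c ∈ C, z c ∈ R (f c) := fun c hc => hzO c (hmemC c hc)
  have hzinjC : ∀ c ∈ C, ∀ c' ∈ C, z c = z c' → c = c' := by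
    intro c hc c' hc' he
    refine hfinjC c hc c' hc' ?_
    exact hR.mem_unique (hzO' c hc) (he ▸ hzO' c' hc')
  have hzRow : ∀ c ∈ C, ∀ i, z c ∈ R i → i = f c := by
    intro c hc i hi
    exact hR.mem_unique hi (hzO' c hc)
  -- surjectivity of f on C
  have hfsurj : ∀ i ∈ C, ∃ cp ∈ C, f cp = i := by
    intro i hi
    rw [hCdef, Finset.mem_image] at hi
    obtain ⟨r, hr, rfl⟩ := hi
    rw [Finset.mem_range] at hr
    rcases Nat.eq_zero_or_pos r with rfl | hrpos
    · refine ⟨f^[p - 1] x, ?_, ?_⟩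
      · rw [hCdef, Finset.mem_image]
        exact ⟨p - 1, Finset.mem_range.2 (by omega), rfl⟩
      · have e : p - 1 + 1 = p := by omega
        calc f (f^[p - 1] x) = f^[p - 1 + 1] x := (Function.iterate_succ_apply' f (p - 1) x).symm
        _ = f^[p] x := by rw [e]
        _ = x := hpp
        _ = f^[0] x := rfl
    · refine ⟨f^[r - 1] x, ?_, ?_⟩
      · rw [hCdef, Finset.mem_image]
        exact ⟨r - 1, Finset.mem_range.2 (by omega), rfl⟩
      · rw [← Function.iterate_succ_apply' f (r - 1) x]
        congr 1
        omega
  -- the rotated partition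
  set R' : Fin M → Finset (Fin (K + 1)) := fun i =>
    if i ∈ C then insert (z i) ((R i).filter (fun v => ∀ c ∈ C, z c ≠ v)) else R i
    with hR'def
  -- the removed element in each cycle row
  have hfilter : ∀ i ∈ C, ∀ cp ∈ C, f cp = i →
      (R i).filter (fun v => ¬ ∀ c ∈ C, z c ≠ v) = {z cp} := by
    intro i hi cp hcp hfcp
    ext v
    rw [mem_filter, mem_singleton]
    constructor
    · rintro ⟨hvR, hv⟩
      push_neg at hv
      obtain ⟨c, hc, hzc⟩ := hv
      have h1 : i = f c := hzRow c hc i (hzc ▸ hvR)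
      have hccp : c = cp := hfinjC c hc cp hcp (by rw [← h1, hfcp])
      rw [← hzc, hccp]
    · rintro rfl
      refine ⟨by rw [← hfcp]; exact hzO' cp hcp, ?_⟩
      push_neg
      exact ⟨cp, hcp, rfl⟩
  have hzi_not : ∀ i ∈ C, z i ∉ (R i).filter (fun v => ∀ c ∈ C, z c ≠ v) := by
    intro i hi hmem
    rw [mem_filter] at hmem
    exact hmem.2 i hi rfl
  have hcards : ∀ i, (R' i).card = m i := by
    intro i
    simp only [hR'def]
    by_cases hi : i ∈ C
    · rw [if_pos hi]
      obtain ⟨cp, hcp, hfcp⟩ := hfsurj i hi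
      have hsplit := Finset.card_filter_add_card_filter_not
        (s := R i) (p := fun v => ∀ c ∈ C, z c ≠ v)
      rw [hfilter i hi cp hcp hfcp, card_singleton] at hsplit
      rw [card_insert_of_notMem (hzi_not i hi)]
      have h1 := hR.1 i
      have h2 := hm i
      omega
    · rw [if_neg hi]
      exact hR.1 i
  have hNP' : NPart m j₁ R' := by
    refine ⟨hcards, ?_, ?_⟩
    · intro i
      simp only [hR'def]
      by_cases hi : i ∈ C
      · rw [if_pos hi, mem_insert]
        rintro (h | h)
        · exact hzS i (hmemC i hi) (h ▸ hj₁)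
        · exact hR.2.1 i (mem_filter.1 h).1
      · rw [if_neg hi]
        exact hR.2.1 i
    · intro v hvj
      by_cases hvz : ∃ c ∈ C, z c = v
      · obtain ⟨c, hc, rfl⟩ := hvz
        refine ⟨c, ?_, ?_⟩
        · simp only [hR'def]
          simp only [if_pos hc]
          exact mem_insert_self _ _
        · intro i hv
          simp only [hR'def] at hv
          by_cases hiC : i ∈ C
          · rw [if_pos hiC] at hv
            rcases mem_insert.1 hv with h | h
            · exact (hzinjC c hc i hiC h).symm
            · exact absurd rfl ((mem_filter.1 h).2 c hc)
          · rw [if_neg hiC] at hv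
            exact absurd (hfC c hc) ((hzRow c hc i hv) ▸ hiC)
      · push_neg at hvz
        obtain ⟨i₁, hi₁, hu₁⟩ := hR.2.2 v hvj
        have hiff : ∀ i, v ∈ R' i ↔ v ∈ R i := by
          intro i
          simp only [hR'def]
          by_cases hiC : i ∈ C
          · rw [if_pos hiC]
            rw [mem_insert, mem_filter]
            constructor
            · rintro (h | h)
              · exact absurd h.symm (hvz i hiC)
              · exact h.1
            · intro h
              exact Or.inr ⟨h, fun c hc => hvz c hc⟩
          · rw [if_neg hiC]
        exact ⟨i₁, (hiff i₁).2 hi₁, fun i hi => hu₁ i ((hiff i).1 hi)⟩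
  have hRt' : ∀ i, ∀ c ∈ R' i, c ∈ Tset A a i := by
    intro i c hc
    simp only [hR'def] at hc
    by_cases hiC : i ∈ C
    · rw [if_pos hiC] at hc
      rcases mem_insert.1 hc with rfl | h
      · exact hzT i (hmemC i hiC)
      · exact hRt i c (mem_filter.1 h).1
    · rw [if_neg hiC] at hc
      exact hRt i c hc
  have hneq : R ≠ R' := by
    intro he
    have h1 : z x ∈ R' x := by
      simp only [hR'def]
      simp only [if_pos hxC]
      exact mem_insert_self _ _
    rw [← he] at h1
    exact hzR x (hmemC x hxC) h1
  exact ⟨j₁, R, R', hR, hRt, hNP', hRt', hneq⟩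

end TWAux



namespace TWAux

open scoped Classical

variable {M K : ℕ} {m : Fin M → ℕ} (A : Fin M → Fin (K + 1) → ℝ) (a : Fin (K + 1) → ℝ)

/-- From a valid set: a solution which is not a translate of `a`. -/
theorem alpha (hale : ∀ j R, NPart m j R → a j ≤ ncost A R)
    (haex : ∀ j, ∃ R, NPart m j R ∧ ncost A R = a j)
    {S : Finset (Fin (K + 1))} (hS : ValidS A a m S) :
    ∃ b : Fin (K + 1) → ℝ,
      (∀ i, m i + 1 ≤ (univ.filter (fun jj => ∀ k, b jj + A i jj ≤ b k + A i k)).card) ∧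
      ¬ (∃ c : ℝ, ∀ j, b j = a j + c) := by
  obtain ⟨⟨j₁, hj₁⟩, hSne, hSval⟩ := hS
  obtain ⟨j₂, hj₂⟩ : ∃ j₂, j₂ ∉ S := by
    by_contra hc
    push_neg at hc
    exact hSne (Finset.eq_univ_iff_forall.2 hc)
  have hcompl : (univ \ S).Nonempty := ⟨j₂, mem_sdiff.2 ⟨mem_univ _, hj₂⟩⟩
  set R1 : Finset (Fin M) := univ.filter (fun i => Tset A a i ⊆ S) with hR1def
  set g : Fin M → ℝ := fun i =>
    ((univ \ S).image (fun jj => a jj + A i jj)).min' (Finset.image_nonempty.2 hcompl)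
      - Sv A a i with hgdef
  have hgmin : ∀ i, ∀ k ∉ S, g i + Sv A a i ≤ a k + A i k := by
    intro i k hk
    have : a k + A i k ∈ (univ \ S).image (fun jj => a jj + A i jj) :=
      mem_image_of_mem _ (mem_sdiff.2 ⟨mem_univ _, hk⟩)
    have := Finset.min'_le _ _ this
    simp only [hgdef]
    linarith
  have hgpos : ∀ i ∈ R1, 0 < g i := by
    intro i hi
    rw [hR1def, mem_filter] at hi
    have hmem := Finset.min'_mem ((univ \ S).image (fun jj => a jj + A i jj))
      (Finset.image_nonempty.2 hcompl)
    obtain ⟨jstar, hjstar, hjeq⟩ := Finset.mem_image.1 hmem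
    have hjS : jstar ∉ S := (mem_sdiff.1 hjstar).2
    have hjT : jstar ∉ Tset A a i := fun hmem => hjS (hi.2 hmem)
    have h1 : Sv A a i ≤ a jstar + A i jstar := Sv_le A a i jstar
    have h2 : a jstar + A i jstar ≠ Sv A a i := fun he => hjT ((mem_Tset A a).2 he)
    simp only [hgdef]
    rw [← hjeq]
    have : Sv A a i < a jstar + A i jstar := lt_of_le_of_ne h1 (fun h => h2 h.symm)
    linarith
  set s : ℝ := if h : R1.Nonempty then (R1.image g).min' (Finset.image_nonempty.2 h) else 1
    with hsdef
  have hspos : 0 < s := by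
    rw [hsdef]
    split_ifs with h
    · have hmem := Finset.min'_mem (R1.image g) (Finset.image_nonempty.2 h)
      obtain ⟨i, hi, hieq⟩ := Finset.mem_image.1 hmem
      rw [← hieq]
      exact hgpos i hi
    · norm_num
  have hsle : ∀ i ∈ R1, s ≤ g i := by
    intro i hi
    rw [hsdef]
    rw [dif_pos ⟨i, hi⟩]
    exact Finset.min'_le _ _ (mem_image_of_mem g hi)
  refine ⟨fun j => a j + (if j ∈ S then s else 0), ?_, ?_⟩
  · intro i
    by_cases hi : Tset A a i ⊆ S
    · have hsub : Tset A a i ⊆ univ.filter (fun jj => ∀ k,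
          (a jj + (if jj ∈ S then s else 0)) + A i jj ≤
          (a k + (if k ∈ S then s else 0)) + A i k) := by
        intro jj hjj
        have hjjS : jj ∈ S := hi hjj
        have hjjT : a jj + A i jj = Sv A a i := (mem_Tset A a).1 hjj
        rw [mem_filter]
        refine ⟨mem_univ _, fun k => ?_⟩
        rw [if_pos hjjS]
        by_cases hk : k ∈ S
        · rw [if_pos hk]
          have := Sv_le A a i k
          linarith
        · rw [if_neg hk]
          have h1 := hgmin i k hk
          have h2 := hsle i (by rw [hR1def, mem_filter]; exact ⟨mem_univ _, hi⟩)
          linarith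
      calc m i + 1 ≤ (Tset A a i).card := Tcard A a hale haex i
      _ ≤ _ := card_le_card hsub
    · have hval : m i + 1 ≤ ((Tset A a i) \ S).card := by
        rcases hSval i with h | h
        · exact absurd h hi
        · exact h
      have hsub : (Tset A a i) \ S ⊆ univ.filter (fun jj => ∀ k,
          (a jj + (if jj ∈ S then s else 0)) + A i jj ≤
          (a k + (if k ∈ S then s else 0)) + A i k) := by
        intro jj hjj
        obtain ⟨hjjT, hjjS⟩ := mem_sdiff.1 hjj
        have hjjT' : a jj + A i jj = Sv A a i := (mem_Tset A a).1 hjjT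
        rw [mem_filter]
        refine ⟨mem_univ _, fun k => ?_⟩
        rw [if_neg hjjS]
        have h1 := Sv_le A a i k
        by_cases hk : k ∈ S
        · rw [if_pos hk]
          linarith
        · rw [if_neg hk]
          linarith
      calc m i + 1 ≤ ((Tset A a i) \ S).card := hval
      _ ≤ _ := card_le_card hsub
  · rintro ⟨c, hc⟩
    have h1 := hc j₁
    have h2 := hc j₂
    simp only [if_pos hj₁] at h1
    simp only [if_neg hj₂] at h2
    have hcs : c = s := by linarith
    have hc0 : c = 0 := by linarith
    rw [hcs] at hc0
    linarith
/-- From a non-translate solution: a valid set. -/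
theorem beta {b : Fin (K + 1) → ℝ}
    (hbsol : ∀ i, m i + 1 ≤ (univ.filter (fun jj => ∀ k, b jj + A i jj ≤ b k + A i k)).card)
    (hnt : ¬ ∃ c : ℝ, ∀ j, b j = a j + c) :
    ∃ S, ValidS A a m S := by
  set d : Fin (K + 1) → ℝ := fun j => b j - a j with hddef
  have hne : (univ.image d).Nonempty := Finset.image_nonempty.2 ⟨0, mem_univ 0⟩
  set c₁ : ℝ := (univ.image d).min' hne with hc₁def
  have hc₁le : ∀ j, c₁ ≤ d j := fun j => Finset.min'_le _ _ (mem_image_of_mem d (mem_univ j))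
  obtain ⟨j₀, -, hj₀⟩ := Finset.mem_image.1 (Finset.min'_mem (univ.image d) hne)
  set S : Finset (Fin (K + 1)) := univ.filter (fun j => c₁ < d j) with hSdef
  have hSne : S.Nonempty := by
    have : ∃ j, d j ≠ c₁ := by
      by_contra hall
      push_neg at hall
      exact hnt ⟨c₁, fun j => by have := hall j; rw [hddef] at this; simp at this; linarith⟩
    obtain ⟨j, hj⟩ := this
    exact ⟨j, by rw [hSdef, mem_filter]; exact ⟨mem_univ _, lt_of_le_of_ne (hc₁le j) (Ne.symm hj)⟩⟩
  have hSuniv : S ≠ univ := by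
    intro he
    have : j₀ ∈ S := he ▸ mem_univ j₀
    rw [hSdef, mem_filter] at this
    rw [hj₀] at this
    exact absurd this.2 (lt_irrefl c₁)
  refine ⟨S, hSne, hSuniv, fun i => ?_⟩
  by_cases hi : Tset A a i ⊆ S
  · exact Or.inl hi
  · refine Or.inr ?_
    obtain ⟨j', hj'T, hj'S⟩ := Finset.not_subset.1 hi
    have hj'd : d j' = c₁ := by
      have h1 : ¬ (c₁ < d j') := by
        intro h
        exact hj'S (by rw [hSdef, mem_filter]; exact ⟨mem_univ _, h⟩)
      have h2 := hc₁le j'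
      linarith
    have hj'T' : a j' + A i j' = Sv A a i := (mem_Tset A a).1 hj'T
    have hsub : univ.filter (fun jj => ∀ k, b jj + A i jj ≤ b k + A i k) ⊆
        (Tset A a i) \ S := by
      intro k hk
      rw [mem_filter] at hk
      have hk1 := hk.2 j'
      have hbj' : b j' + A i j' = Sv A a i + c₁ := by
        have : b j' = a j' + d j' := by rw [hddef]; ring
        rw [this, hj'd]
        linarith
      have hbk : b k + A i k = (a k + A i k - Sv A a i) + (d k - c₁) + (Sv A a i + c₁) := by
        have : b k = a k + d k := by rw [hddef]; ring
        rw [this]; ring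
      have hge1 : 0 ≤ a k + A i k - Sv A a i := by have := Sv_le A a i k; linarith
      have hge2 : 0 ≤ d k - c₁ := by have := hc₁le k; linarith
      rw [hbj'] at hk1
      rw [hbk] at hk1
      have he1 : a k + A i k = Sv A a i := by linarith
      have he2 : d k = c₁ := by linarith
      refine mem_sdiff.2 ⟨(mem_Tset A a).2 he1, ?_⟩
      rw [hSdef, mem_filter]
      rintro ⟨-, hlt⟩
      rw [he2] at hlt
      exact absurd hlt (lt_irrefl c₁)
    calc m i + 1 ≤ _ := hbsol i
    _ ≤ ((Tset A a i) \ S).card := card_le_card hsub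

end TWAux

namespace TWAux


open scoped Classical

variable {M K : ℕ} {m : Fin M → ℕ} (A : Fin M → Fin (K + 1) → ℝ)

/-- Mapping a minor partition into a partition of the full column set minus `j`. -/
def toN (j : Fin (K + 1)) (P : Fin M → Finset (Fin K)) : Fin M → Finset (Fin (K + 1)) :=
  fun i => (P i).map j.succAboveEmb

theorem erase_eq_map (j : Fin (K + 1)) :
    (univ : Finset (Fin (K + 1))).erase j = univ.map j.succAboveEmb := by
  ext c
  rw [mem_erase, Finset.mem_map]
  constructor
  · rintro ⟨hc, -⟩
    obtain ⟨k, hk⟩ := Fin.exists_succAbove_eq hc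
    exact ⟨k, mem_univ _, hk⟩
  · rintro ⟨k, -, rfl⟩
    exact ⟨Fin.succAbove_ne j k, mem_univ _⟩

theorem mem_toN {j : Fin (K + 1)} {P : Fin M → Finset (Fin K)} {i : Fin M} {k : Fin K} :
    j.succAbove k ∈ toN j P i ↔ k ∈ P i := by
  unfold toN
  rw [Finset.mem_map]
  constructor
  · rintro ⟨k', hk', he⟩
    have he' : j.succAbove k' = j.succAbove k := he
    have : k' = k := Fin.succAbove_right_injective he'
    rwa [← this]
  · intro h
    exact ⟨k, h, rfl⟩

theorem toN_npart {j : Fin (K + 1)} {P : Fin M → Finset (Fin K)}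
    (hP : IsTWPartition m P) : NPart m j (toN j P) := by
  refine ⟨fun i => ?_, fun i => ?_, fun c hc => ?_⟩
  · rw [toN, Finset.card_map]; exact hP.1 i
  · rw [toN]
    intro hmem
    obtain ⟨k, -, hk⟩ := Finset.mem_map.1 hmem
    exact Fin.succAbove_ne j k hk
  · obtain ⟨k, hk⟩ := Fin.exists_succAbove_eq hc
    obtain ⟨i₀, hi₀, hu⟩ := hP.2 k
    refine ⟨i₀, ?_, ?_⟩
    · rw [← hk]; exact mem_toN.2 hi₀
    · intro i hi
      rw [← hk] at hi
      exact hu i (mem_toN.1 hi)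

theorem toN_cost (j : Fin (K + 1)) (P : Fin M → Finset (Fin K)) :
    partSum (minorMatrix A j) P = ncost A (toN j P) := by
  unfold partSum ncost toN
  refine Finset.sum_congr rfl (fun i _ => ?_)
  rw [Finset.sum_map]
  rfl

theorem toN_inj {j : Fin (K + 1)} {P Q : Fin M → Finset (Fin K)}
    (h : toN j P = toN j Q) : P = Q := by
  funext i
  have := congrFun h i
  exact Finset.map_injective j.succAboveEmb this

theorem npart_toN {j : Fin (K + 1)} {R : Fin M → Finset (Fin (K + 1))}
    (hR : NPart m j R) : ∃ P, IsTWPartition m P ∧ R = toN j P := by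
  have hsub : ∀ i, ∃ u : Finset (Fin K), u ⊆ univ ∧ R i = u.map j.succAboveEmb := by
    intro i
    refine Finset.subset_map_iff.1 ?_
    rw [← erase_eq_map]
    intro c hc
    exact mem_erase.2 ⟨hR.ne_hole hc, mem_univ _⟩
  choose u hu1 hu2 using hsub
  refine ⟨u, ⟨fun i => ?_, fun k => ?_⟩, by funext i; exact hu2 i⟩
  · have := hR.1 i
    rw [hu2 i, Finset.card_map] at this
    exact this
  · have hkj : j.succAbove k ≠ j := Fin.succAbove_ne j k
    obtain ⟨i₀, hi₀, hcu⟩ := hR.2.2 _ hkj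
    have he : ∀ i', R i' = toN j u i' := fun i' => hu2 i'
    have hi₀' : j.succAbove k ∈ R i₀ := hi₀
    rw [he i₀] at hi₀'
    refine ⟨i₀, mem_toN.1 hi₀', fun i hi => ?_⟩
    have hmem : j.succAbove k ∈ R i := by rw [he i]; exact mem_toN.2 hi
    exact hcu i hmem

section withA

variable (hw : ∑ i, m i = K) (a : Fin (K + 1) → ℝ)
  (ha : a = fun j => twPerm m (minorMatrix A j))

include ha

theorem twPerm_le {j : Fin (K + 1)} {P : Fin M → Finset (Fin K)}
    (hP : IsTWPartition m P) : a j ≤ partSum (minorMatrix A j) P := by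
  rw [ha]
  refine csInf_le ?_ ⟨P, hP, rfl⟩
  exact (Set.toFinite _).image _ |>.bddBelow

theorem hale_holds : ∀ j R, NPart m j R → a j ≤ ncost A R := by
  intro j R hR
  obtain ⟨P, hP, rfl⟩ := npart_toN hR
  rw [← toN_cost]
  exact twPerm_le A a ha hP

include hw

theorem haex_holds : ∀ j, ∃ R, NPart m j R ∧ ncost A R = a j := by
  intro j
  have hne : (partSum (minorMatrix A j) '' {P | IsTWPartition m P}).Nonempty := by
    obtain ⟨P, hP1, hP2, hP3⟩ := exists_partition m (univ : Finset (Fin K))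
      (by rw [card_univ, Fintype.card_fin, hw])
    exact ⟨_, ⟨P, ⟨hP2, fun k => hP3 k (mem_univ k)⟩, rfl⟩⟩
  have hmem := hne.csInf_mem ((Set.toFinite _).image _)
  obtain ⟨P, hP, hPeq⟩ := hmem
  refine ⟨toN j P, toN_npart hP, ?_⟩
  rw [← toN_cost, hPeq, ha]
  rfl

theorem singular_iff {j : Fin (K + 1)} :
    TWSingular m (minorMatrix A j) ↔
      ∃ R R' : Fin M → Finset (Fin (K + 1)), NPart m j R ∧ NPart m j R' ∧ R ≠ R' ∧
        ncost A R = a j ∧ ncost A R' = a j := by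
  constructor
  · rintro ⟨P, Q, hP, hQ, hne, heq, hmin⟩
    have hPmin : partSum (minorMatrix A j) P = a j := by
      refine le_antisymm ?_ (twPerm_le A a ha hP)
      rw [ha]
      refine le_csInf ⟨_, ⟨P, hP, rfl⟩⟩ ?_
      rintro b ⟨P', hP', rfl⟩
      exact hmin P' hP'
    refine ⟨toN j P, toN j Q, toN_npart hP, toN_npart hQ, ?_, ?_, ?_⟩
    · intro h; exact hne (toN_inj h)
    · rw [← toN_cost]; exact hPmin
    · rw [← toN_cost, ← heq]; exact hPmin
  · rintro ⟨R, R', hR, hR', hne, hc, hc'⟩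
    obtain ⟨P, hP, rfl⟩ := npart_toN hR
    obtain ⟨Q, hQ, rfl⟩ := npart_toN hR'
    refine ⟨P, Q, hP, hQ, ?_, ?_, ?_⟩
    · intro h; exact hne (congrArg (toN j) h)
    · rw [← toN_cost] at hc hc'; rw [hc, hc']
    · intro P' hP'
      rw [← toN_cost] at hc
      rw [hc]
      have := hale_holds A a ha j (toN j P') (toN_npart hP')
      rw [← toN_cost] at this
      exact this

end withA

end TWAux


end TWAuxSection

open Set

/-- Geometric tropical weighted Cramer's rule: for an `n`-dimensional lattice polytope `Δ`
with `N = K + 1` lattice points `I j`, points `x i` with multiplicities `m i` summing to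
`N - 1 = K`, the coefficient vector of maximal tw-minors of the evaluation matrix
`A i j = I j · x i` defines a hypersurface with multiplicity at least `m i` at each `x i`;
it is the unique such coefficient vector (up to adding a constant) iff all maximal
tw-minors of `A` are tw-nonsingular. -/
theorem cramer_hypersurface {n M K : ℕ} (m : Fin M → ℕ)
    (hm : ∀ i, 1 ≤ m i) (hw : ∑ i, m i = K)
    (I : Fin (K + 1) → Fin n → ℤ) (hI : Function.Injective I)
    (Δ : Set (Fin n → ℝ))
    (hΔ : Δ = convexHull ℝ (Set.range fun j => toR (I j)))
    (hlat : ∀ p : Fin n → ℤ, toR p ∈ Δ ↔ ∃ j, I j = p)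
    (hdim : Module.finrank ℝ (vectorSpan ℝ Δ) = n)
    (x : Fin M → Fin n → ℝ)
    (A : Fin M → Fin (K + 1) → ℝ)
    (hA : A = fun i j => dotIR (I j) (x i))
    (a : Fin (K + 1) → ℝ)
    (ha : a = fun j => twPerm m (minorMatrix A j)) :
    (∀ i, MultAtLeast I a (x i) (m i)) ∧
      ((∀ a' : Fin (K + 1) → ℝ, (∀ i, MultAtLeast I a' (x i) (m i)) →
          ∃ c : ℝ, ∀ j, a' j = a j + c) ↔
        ∀ j : Fin (K + 1), ¬ TWSingular m (minorMatrix A j)) := by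
  classical
  open Finset in
  -- translate MultAtLeast into a Finset statement about A
  have hMA : ∀ (v : Fin (K + 1) → ℝ) (i : Fin M) (μ : ℕ),
      MultAtLeast I v (x i) μ ↔
        μ + 1 ≤ (Finset.univ.filter
          (fun jj => ∀ k, v jj + A i jj ≤ v k + A i k)).card := by
    intro v i μ
    unfold MultAtLeast
    have hset : {j : Fin (K + 1) | ∀ k, v j + dotIR (I j) (x i) ≤ v k + dotIR (I k) (x i)} =
        ↑(Finset.univ.filter (fun jj => ∀ k, v jj + A i jj ≤ v k + A i k)) := by
      ext jj
      simp only [Set.mem_setOf_eq, Finset.coe_filter, Finset.mem_univ, true_and, hA]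
    rw [hset, Set.ncard_coe_finset]
  have hale := TWAux.hale_holds A a ha
  have haex := TWAux.haex_holds A hw a ha
  constructor
  · -- Part 1: a itself is a solution
    intro i
    rw [hMA a i (m i)]
    have hsub : TWAux.Tset A a i ⊆ Finset.univ.filter
        (fun jj => ∀ k, a jj + A i jj ≤ a k + A i k) := by
      intro jj hjj
      have hjj' := (TWAux.mem_Tset A a).1 hjj
      rw [Finset.mem_filter]
      refine ⟨Finset.mem_univ _, fun k => ?_⟩
      have := TWAux.Sv_le A a i k
      linarith
    calc m i + 1 ≤ (TWAux.Tset A a i).card := TWAux.Tcard A a hale haex i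
    _ ≤ _ := Finset.card_le_card hsub
  · constructor
    · -- uniqueness implies nonsingularity
      intro hLHS j₀ hsing
      obtain ⟨R, R', hR, hR', hne, hc, hc'⟩ :=
        (TWAux.singular_iff A hw a ha).1 hsing
      have hRt := (TWAux.tight_iff_min A a hw hale haex hR).1 hc
      have hRt' := (TWAux.tight_iff_min A a hw hale haex hR').1 hc'
      have hvalid : ∃ S, TWAux.ValidS A a m S := by
        by_contra hno
        push_neg at hno
        exact hne (TWAux.unique_of_no_valid A a hm hw hno hR hRt hR' hRt')
      obtain ⟨S, hS⟩ := hvalid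
      obtain ⟨b, hbsol, hbnt⟩ := TWAux.alpha A a hale haex hS
      refine hbnt ?_
      refine hLHS b (fun i => ?_)
      rw [hMA b i (m i)]
      exact hbsol i
    · -- nonsingularity implies uniqueness
      intro hRHS a' hsol
      by_contra hnoc
      have hbsol : ∀ i, m i + 1 ≤ (Finset.univ.filter
          (fun jj => ∀ k, a' jj + A i jj ≤ a' k + A i k)).card := by
        intro i
        rw [← hMA a' i (m i)]
        exact hsol i
      obtain ⟨S, hS⟩ := TWAux.beta A a hbsol hnoc
      obtain ⟨j₁, R, R', hR, hRt, hR', hRt', hne⟩ :=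
        TWAux.two_tight_of_valid A a hm hw hale haex hS
      refine hRHS j₁ ?_
      refine (TWAux.singular_iff A hw a ha).2 ⟨R, R', hR, hR', hne, ?_, ?_⟩
      · exact (TWAux.tight_iff_min A a hw hale haex hR).2 hRt
      · exact (TWAux.tight_iff_min A a hw hale haex hR').2 hRt'
end

section
/- Let 𝒫 be a lattice simplicial decomposition of a lattice polytope Δ ⊂ ℝⁿ with a weighting μ satisfying |μ| = |Δ| − 1. If there exists a nonempty subset L ⊆ L(Δ) with used(L) ≥ |L|, then μ is not rigid. -/
open Set

/-- A point of `ℝⁿ` with integer coordinates. -/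
def IsLatticePoint {n : ℕ} (x : Fin n → ℝ) : Prop := ∀ i, ∃ z : ℤ, x i = (z : ℝ)

/-- The lattice points of a subset of `ℝⁿ`. -/
def latticePts {n : ℕ} (P : Set (Fin n → ℝ)) : Set (Fin n → ℝ) :=
  {x ∈ P | IsLatticePoint x}

/-- A lattice polytope: the convex hull of finitely many lattice points. -/
def IsLatticePolytope {n : ℕ} (P : Set (Fin n → ℝ)) : Prop :=
  ∃ S : Finset (Fin n → ℝ), (∀ x ∈ S, IsLatticePoint x) ∧
    P = convexHull ℝ (S : Set (Fin n → ℝ))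

/-- The dimension of a polytope: the rank of its direction space. -/
noncomputable def polyDim {n : ℕ} (P : Set (Fin n → ℝ)) : ℕ :=
  Module.finrank ℝ (vectorSpan ℝ P)

/-- A lattice polyhedral decomposition of `Δ`. -/
def IsLatticeDecomp {n : ℕ} (Δ : Set (Fin n → ℝ)) (cplx : Finset (Set (Fin n → ℝ))) : Prop :=
  (∀ P ∈ cplx, P.Nonempty) ∧
  (∀ P ∈ cplx, IsLatticePolytope P) ∧
  (∀ P ∈ cplx, ∀ F : Set (Fin n → ℝ), IsExtreme ℝ P F → F.Nonempty → F ∈ cplx) ∧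
  (∀ P ∈ cplx, ∀ Q ∈ cplx, IsExtreme ℝ P (P ∩ Q) ∧ IsExtreme ℝ Q (P ∩ Q)) ∧
  ⋃₀ (cplx : Set (Set (Fin n → ℝ))) = Δ

/-- A weighting of `cplx`: `0 ≤ μ P ≤ |P| - 1` for all members `P`. -/
def IsWeighting {n : ℕ} (cplx : Finset (Set (Fin n → ℝ))) (μ : Set (Fin n → ℝ) → ℤ) : Prop :=
  ∀ P ∈ cplx, 0 ≤ μ P ∧ μ P ≤ ((latticePts P).ncard : ℤ) - 1

/-- `cplx` is lattice simplicial. -/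
def LatticeSimplicial {n : ℕ} (cplx : Finset (Set (Fin n → ℝ))) : Prop :=
  ∀ P ∈ cplx, (latticePts P).ncard = polyDim P + 1

/-- The vertices (`0`-dimensional members) of `cplx`, as a set of points. -/
def vertexSet {n : ℕ} (cplx : Finset (Set (Fin n → ℝ))) : Set (Fin n → ℝ) :=
  {x | ({x} : Set (Fin n → ℝ)) ∈ cplx}

/-- `L` is deformable with respect to `μ`. -/
def Deformable {n : ℕ} (Δ : Set (Fin n → ℝ)) (cplx : Finset (Set (Fin n → ℝ)))
    (μ : Set (Fin n → ℝ) → ℤ) (L : Set (Fin n → ℝ)) : Prop :=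
  L.Nonempty ∧ L ⊆ latticePts Δ ∧ ¬ vertexSet cplx ⊆ L ∧
    ∀ P ∈ cplx, P ∩ L = ∅ ∨ μ P + 1 ≤ ((P ∩ L).ncard : ℤ)

/-- `μ` is rigid if no `L` is deformable. -/
def Rigid {n : ℕ} (Δ : Set (Fin n → ℝ)) (cplx : Finset (Set (Fin n → ℝ)))
    (μ : Set (Fin n → ℝ) → ℤ) : Prop :=
  ¬ ∃ L, Deformable Δ cplx μ L

/-- `used(L) = Σ_{P : |P ∩ L| ≥ μ(P) + 1} μ(P)`. -/
noncomputable def usedWeight {n : ℕ} (cplx : Finset (Set (Fin n → ℝ))) (μ : Set (Fin n → ℝ) → ℤ)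
    (L : Set (Fin n → ℝ)) : ℤ :=
  ∑ P ∈ cplx, if μ P + 1 ≤ ((P ∩ L).ncard : ℤ) then μ P else 0

lemma latticePts_finite {n : ℕ} {Δ : Set (Fin n → ℝ)} (h : IsLatticePolytope Δ) :
    (latticePts Δ).Finite := by
  obtain ⟨S, hS, rfl⟩ := h
  have hcomp : IsCompact (convexHull ℝ (S : Set (Fin n → ℝ))) :=
    S.finite_toSet.isCompact_convexHull (𝕜 := ℝ)
  obtain ⟨C, hC⟩ := isBounded_iff_forall_norm_le.mp hcomp.isBounded
  have hsub : latticePts (convexHull ℝ (S : Set (Fin n → ℝ))) ⊆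
      (fun f : Fin n → ℤ => fun i => (f i : ℝ)) ''
        (Set.Icc (fun _ => -⌈C⌉) (fun _ => ⌈C⌉)) := by
    rintro x ⟨hx, hlat⟩
    choose f hf using hlat
    have hxf : x = fun i => (f i : ℝ) := funext hf
    refine ⟨f, ⟨fun i => ?_, fun i => ?_⟩, hxf.symm⟩
    · have h1 : |x i| ≤ C := (Real.norm_eq_abs _ ▸ norm_le_pi_norm x i).trans (hC x hx)
      have h2 : -C ≤ (f i : ℝ) := by rw [← hf i]; linarith [abs_le.mp h1]
      have : (-(⌈C⌉:ℤ) : ℝ) ≤ (f i : ℝ) := by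
        push_cast
        linarith [Int.le_ceil C]
      exact_mod_cast this
    · have h1 : |x i| ≤ C := (Real.norm_eq_abs _ ▸ norm_le_pi_norm x i).trans (hC x hx)
      have : (f i : ℝ) ≤ ((⌈C⌉:ℤ) : ℝ) := by
        rw [← hf i]
        have := abs_le.mp h1
        push_cast
        linarith [Int.le_ceil C]
      exact_mod_cast this
  exact ((Set.finite_Icc _ _).image _).subset hsub

lemma lattice_pts_extreme {n : ℕ} {P : Set (Fin n → ℝ)} (hPne : P.Nonempty)
    (hpoly : IsLatticePolytope P) (hfinP : (latticePts P).Finite)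
    (hsimp : (latticePts P).ncard = polyDim P + 1)
    {x : Fin n → ℝ} (hx : x ∈ latticePts P) : IsExtreme ℝ P {x} := by
  obtain ⟨S, hSlat, hSP⟩ := hpoly
  have hPconv : Convex ℝ P := hSP ▸ convex_convexHull ℝ _
  have hPcomp : IsCompact P := hSP ▸ S.finite_toSet.isCompact_convexHull (𝕜 := ℝ)
  set E := P.extremePoints ℝ with hE
  have hES : E ⊆ latticePts P := by
    intro y hy
    have hyP : y ∈ P := by rw [hE] at hy; exact hy.1
    have hyS : y ∈ (S : Set (Fin n → ℝ)) := by
      rw [hE, hSP] at hy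
      exact extremePoints_convexHull_subset hy
    exact ⟨hyP, hSlat y hyS⟩
  have hEfin : E.Finite := hfinP.subset hES
  have hconvE : convexHull ℝ E = P := by
    have h1 := closure_convexHull_extremePoints hPcomp hPconv
    rwa [(hEfin.isCompact_convexHull (𝕜 := ℝ)).isClosed.closure_eq] at h1
  have hEne : E.Nonempty := by
    rw [← convexHull_nonempty_iff (𝕜 := ℝ), hconvE]; exact hPne
  have hvs : vectorSpan ℝ E = vectorSpan ℝ P := by
    rw [← direction_affineSpan, ← direction_affineSpan, ← hconvE, affineSpan_convexHull]
  haveI := hEfin.fintype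
  haveI : Nonempty E := hEne.to_subtype
  have hcard : polyDim P + 1 ≤ E.ncard := by
    have h1 := finrank_vectorSpan_range_add_one_le ℝ (Subtype.val : E → (Fin n → ℝ))
    rw [Subtype.range_coe, hvs] at h1
    have h2 : Fintype.card E = E.ncard := by
      rw [← Nat.card_eq_fintype_card, Nat.card_coe_set_eq]
    rw [h2] at h1
    exact h1
  have hEeq : E = latticePts P := Set.eq_of_subset_of_ncard_le hES (by omega) hfinP
  have : x ∈ E := hEeq ▸ hx
  exact isExtreme_singleton.mpr this

/-- For a lattice simplicial decomposition with `|μ| = |Δ| - 1`: if some nonempty set of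
lattice points `L` satisfies `used(L) ≥ |L|`, then `μ` is not rigid. -/
theorem not_rigid_of_used_ge {n : ℕ} (Δ : Set (Fin n → ℝ)) (cplx : Finset (Set (Fin n → ℝ)))
    (μ : Set (Fin n → ℝ) → ℤ)
    (hΔ : IsLatticePolytope Δ) (hdec : IsLatticeDecomp Δ cplx)
    (hsimp : LatticeSimplicial cplx) (hw : IsWeighting cplx μ)
    (hsum : ∑ P ∈ cplx, μ P = ((latticePts Δ).ncard : ℤ) - 1)
    (L : Set (Fin n → ℝ)) (hL : L.Nonempty) (hLsub : L ⊆ latticePts Δ)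
    (hused : (L.ncard : ℤ) ≤ usedWeight cplx μ L) :
    ¬ Rigid Δ cplx μ := by
  classical
  intro hrig
  obtain ⟨hne, hpoly, hface, hint, hcup⟩ := hdec
  have hDfin : (latticePts Δ).Finite := latticePts_finite hΔ
  have hPsub : ∀ P ∈ cplx, P ⊆ Δ := fun P hP => hcup ▸ Set.subset_sUnion_of_mem hP
  have hlatP : ∀ P ∈ cplx, latticePts P ⊆ latticePts Δ := by
    intro P hP x hx
    exact ⟨hPsub P hP hx.1, hx.2⟩
  set D : Finset (Fin n → ℝ) := hDfin.toFinset with hD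
  have hmemD : ∀ x, x ∈ D ↔ x ∈ latticePts Δ := fun x => hDfin.mem_toFinset
  set Good : Finset (Fin n → ℝ) → Prop :=
    fun M => L ⊆ ↑M ∧ M ⊆ D ∧ (M.card : ℤ) ≤ usedWeight cplx μ ↑M with hGoodDef
  have hLfin : L.Finite := hDfin.subset hLsub
  have hGoodL : Good hLfin.toFinset := by
    refine ⟨by rw [hLfin.coe_toFinset], ?_, ?_⟩
    · intro x hx
      rw [hmemD]
      exact hLsub (hLfin.mem_toFinset.mp hx)
    · rw [hLfin.coe_toFinset, ← Set.ncard_eq_toFinset_card _ hLfin]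
      exact hused
  set 𝒢 : Finset (Finset (Fin n → ℝ)) := D.powerset.filter Good with h𝒢
  have h𝒢mem : ∀ M, M ∈ 𝒢 ↔ Good M := by
    intro M
    simp only [h𝒢, Finset.mem_filter, Finset.mem_powerset]
    exact ⟨fun h => h.2, fun h => ⟨h.2.1, h⟩⟩
  obtain ⟨M, hM𝒢, hmax⟩ := Finset.exists_max_image 𝒢 Finset.card
    ⟨hLfin.toFinset, (h𝒢mem _).mpr hGoodL⟩
  obtain ⟨hLM, hMD, hMused⟩ := (h𝒢mem M).mp hM𝒢
  have hMlat : (M : Set (Fin n → ℝ)) ⊆ latticePts Δ := by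
    intro x hx
    exact (hmemD x).mp (hMD hx)
  refine hrig ⟨↑M, hL.mono hLM, hMlat, ?_, ?_⟩
  · -- ¬ vertexSet cplx ⊆ ↑M
    intro hvsub
    have hDv : latticePts Δ ⊆ vertexSet cplx := by
      intro x hx
      have hxΔ : x ∈ ⋃₀ (cplx : Set (Set (Fin n → ℝ))) := hcup ▸ hx.1
      obtain ⟨P, hP, hxP⟩ := hxΔ
      have hxlP : x ∈ latticePts P := ⟨hxP, hx.2⟩
      have hext : IsExtreme ℝ P {x} :=
        lattice_pts_extreme (hne P hP) (hpoly P hP) (hDfin.subset (hlatP P hP))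
          (hsimp P hP) hxlP
      exact hface P hP {x} hext (Set.singleton_nonempty x)
    have hMeq : (M : Set (Fin n → ℝ)) = latticePts Δ :=
      Set.Subset.antisymm hMlat (fun x hx => hvsub (hDv hx))
    have hcard : (M.card : ℤ) = ((latticePts Δ).ncard : ℤ) := by
      rw [← hMeq, Set.ncard_coe_finset]
    have hule : usedWeight cplx μ ↑M ≤ ∑ P ∈ cplx, μ P := by
      apply Finset.sum_le_sum
      intro P hP
      split
      · exact le_refl _
      · exact (hw P hP).1
    rw [hsum] at hule
    omega
  · -- deformability condition for each P
    intro P hP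
    rcases eq_or_ne (P ∩ ↑M) ∅ with hPM | hPM
    · exact Or.inl hPM
    right
    by_contra hlt
    push_neg at hlt
    have hμ0 : 0 ≤ μ P := (hw P hP).1
    have hPMne : (P ∩ ↑M).Nonempty := Set.nonempty_iff_ne_empty.mpr hPM
    have hPMfin : (P ∩ ↑M).Finite := M.finite_toSet.subset Set.inter_subset_right
    have hPMlat : P ∩ ↑M ⊆ latticePts P := by
      rintro y ⟨hyP, hyM⟩
      exact ⟨hyP, (hMlat hyM).2⟩
    have hKfin : (latticePts P).Finite := hDfin.subset (hlatP P hP)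
    set m : ℕ := (μ P).toNat with hm
    have hmμ : (m : ℤ) = μ P := Int.toNat_of_nonneg hμ0
    have hμle : μ P + 1 ≤ ((latticePts P).ncard : ℤ) := by
      have := (hw P hP).2
      omega
    set A : Finset (Fin n → ℝ) := hPMfin.toFinset with hA
    set B : Finset (Fin n → ℝ) := hKfin.toFinset with hB
    have hAB : A ⊆ B := by
      intro y hy
      exact hKfin.mem_toFinset.mpr (hPMlat (hPMfin.mem_toFinset.mp hy))
    have hAcard : (A.card : ℤ) = ((P ∩ ↑M).ncard : ℤ) := by
      rw [Set.ncard_eq_toFinset_card _ hPMfin]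
    have hApos : 1 ≤ A.card := Finset.card_pos.mpr
      (by rwa [hA, Set.Finite.toFinset_nonempty])
    have hAle : A.card ≤ m := by
      have : ((P ∩ ↑M).ncard : ℤ) ≤ μ P := by omega
      omega
    have hBcard : m + 1 ≤ B.card := by
      have : ((latticePts P).ncard : ℤ) = (B.card : ℤ) := by
        rw [hB, Set.ncard_eq_toFinset_card _ hKfin]
      omega
    obtain ⟨T, hAT, hTB, hTcard⟩ :=
      Finset.exists_subsuperset_card_eq hAB (by omega) hBcard
    have hTP : (T : Set (Fin n → ℝ)) ⊆ P := by
      intro y hy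
      exact ((hKfin.mem_toFinset.mp (hTB hy)) : y ∈ latticePts P).1
    have hAM : A ⊆ M := by
      intro y hy
      have : y ∈ P ∩ ↑M := hPMfin.mem_toFinset.mp hy
      exact_mod_cast this.2
    set M' : Finset (Fin n → ℝ) := M ∪ T with hM'
    -- M ⊊ M'
    have hMM' : M ⊆ M' := Finset.subset_union_left
    have hMneq : M ≠ M' := by
      intro heq
      have hTM : T ⊆ M := heq ▸ Finset.subset_union_right
      have hTA : T ⊆ A := by
        intro y hy
        exact hPMfin.mem_toFinset.mpr ⟨hTP hy, hTM hy⟩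
      have := Finset.card_le_card hTA
      omega
    have hcardlt : M.card < M'.card := Finset.card_lt_card (ssubset_of_ne_of_subset hMneq hMM')
    -- M' is Good
    have hM'D : M' ⊆ D := by
      intro y hy
      rcases Finset.mem_union.mp hy with h | h
      · exact hMD h
      · exact (hmemD y).mpr (hlatP P hP (hKfin.mem_toFinset.mp (hTB h)))
    have hM'card : (M'.card : ℤ) ≤ (M.card : ℤ) + μ P := by
      have h1 : (M ∪ T).card + (M ∩ T).card = M.card + T.card :=
        Finset.card_union_add_card_inter M T
      have h2 : A ⊆ M ∩ T := Finset.subset_inter hAM hAT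
      have h3 : A.card ≤ (M ∩ T).card := Finset.card_le_card h2
      have : (M ∪ T).card + 1 ≤ M.card + (m + 1) := by omega
      rw [← hM'] at this
      push_cast
      omega
    -- usedWeight grows by at least μ P
    have hsubM' : (M : Set (Fin n → ℝ)) ⊆ ↑M' := by exact_mod_cast hMM'
    have hmono : ∀ Q, ((Q ∩ (M : Set (Fin n → ℝ))).ncard : ℤ) ≤ ((Q ∩ (M' : Set (Fin n → ℝ))).ncard : ℤ) := by
      intro Q
      have hfin : (Q ∩ (M' : Set (Fin n → ℝ))).Finite := M'.finite_toSet.subset Set.inter_subset_right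
      exact_mod_cast Set.ncard_le_ncard (Set.inter_subset_inter_right Q hsubM') hfin
    have hused' : usedWeight cplx μ ↑M + μ P ≤ usedWeight cplx μ ↑M' := by
      have hPterm : (if μ P + 1 ≤ ((P ∩ (M : Set (Fin n → ℝ))).ncard : ℤ) then μ P else 0) = 0 := by
        rw [if_neg]
        omega
      have hPterm' : (if μ P + 1 ≤ ((P ∩ (M' : Set (Fin n → ℝ))).ncard : ℤ) then μ P else 0) = μ P := by
        rw [if_pos]
        have hTsub : (T : Set (Fin n → ℝ)) ⊆ P ∩ ↑M' := by
          intro y hy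
          exact ⟨hTP hy, by exact_mod_cast Finset.mem_union.mpr (Or.inr (by exact_mod_cast hy))⟩
        have hfin : (P ∩ (M' : Set (Fin n → ℝ))).Finite := M'.finite_toSet.subset Set.inter_subset_right
        have := Set.ncard_le_ncard hTsub hfin
        rw [Set.ncard_coe_finset, hTcard] at this
        omega
      rw [usedWeight, usedWeight, ← Finset.sum_erase_add _ _ hP, ← Finset.sum_erase_add _ _ hP,
        hPterm, hPterm']
      have hsumle : ∑ Q ∈ cplx.erase P, (if μ Q + 1 ≤ ((Q ∩ (M : Set (Fin n → ℝ))).ncard : ℤ) then μ Q else 0)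
          ≤ ∑ Q ∈ cplx.erase P, (if μ Q + 1 ≤ ((Q ∩ (M' : Set (Fin n → ℝ))).ncard : ℤ) then μ Q else 0) := by
        apply Finset.sum_le_sum
        intro Q hQ
        have hQc : Q ∈ cplx := Finset.mem_of_mem_erase hQ
        by_cases hc : μ Q + 1 ≤ ((Q ∩ (M : Set (Fin n → ℝ))).ncard : ℤ)
        · rw [if_pos hc, if_pos (le_trans hc (hmono Q))]
        · rw [if_neg hc]
          split
          · exact (hw Q hQc).1
          · exact le_refl _
      omega
    have hGoodM' : Good M' := by
      refine ⟨subset_trans hLM (by exact_mod_cast hMM'), hM'D, ?_⟩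
      omega
    have := hmax M' ((h𝒢mem M').mpr hGoodM')
    omega
end
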